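/- arXiv:2301.01267 — 7 statements merged into one kernel-verified Lean document; each statement's English description precedes it below -/
import Mathlib

section
/- Let (X_i)_{i≥1} be nonnegative random variables with E[exp(X_i^p)] < C for all i, where p > 0 and C > 0 are constants. Define M_n = max_{1 ≤ i ≤ n} X_i − (2 log n)^{1/p}. Then there exist constants c, C' > 0 depending only on p and C such that E[exp(c · (M_n)_+^p)] < C' for all n ≥ 1. -/
open MeasureTheory

/-- If `(X_i)` are nonnegative random variables with `E[exp(X_i^p)] < C`, then with
`M_n = max_{1 ≤ i ≤ n} X_i - (2 log n)^{1/p}` one has `E[exp(c (M_n)₊^p)] < C'`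
for constants `c, C'` depending only on `p` and `C`. -/
theorem stmt3 (p C : ℝ) (hp : 0 < p) (hC : 0 < C) :
    ∃ c C' : ℝ, 0 < c ∧ 0 < C' ∧
      ∀ (Ω : Type) [MeasurableSpace Ω] (μ : Measure Ω) [IsProbabilityMeasure μ]
        (X : ℕ → Ω → ℝ),
        (∀ i, Measurable (X i)) →
        (∀ i ω, 0 ≤ X i ω) →
        (∀ i, (∫⁻ ω, ENNReal.ofReal (Real.exp ((X i ω) ^ p)) ∂μ) < ENNReal.ofReal C) →
        ∀ n : ℕ, ∀ hn : 1 ≤ n,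
          (∫⁻ ω, ENNReal.ofReal (Real.exp (c *
              (max ((Finset.Icc 1 n).sup' (Finset.nonempty_Icc.mpr hn) (fun i => X i ω)
                  - (2 * Real.log n) ^ (1 / p)) 0) ^ p)) ∂μ)
            < ENNReal.ofReal C' := by
  refine ⟨1/2, C + 2, by norm_num, by linarith, ?_⟩
  intro Ω _ μ _ X hmeas hpos hexp n hn
  have hne : (Finset.Icc 1 n).Nonempty := Finset.nonempty_Icc.mpr hn
  set L : ℝ := (2 * Real.log n) ^ (1 / p) with hLdef
  have hn1 : (1:ℝ) ≤ (n:ℝ) := by exact_mod_cast hn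
  have hnpos : (0:ℝ) < (n:ℝ) := by linarith
  have hlogn : 0 ≤ Real.log n := Real.log_nonneg hn1
  have h2log : (0:ℝ) ≤ 2 * Real.log n := by linarith
  have hLnonneg : 0 ≤ L := Real.rpow_nonneg h2log _
  have hLp : L ^ p = 2 * Real.log n := by
    rw [hLdef, ← Real.rpow_mul h2log, one_div_mul_cancel hp.ne', Real.rpow_one]
  -- pointwise bound
  have key : ∀ ω, Real.exp (1/2 *
      (max ((Finset.Icc 1 n).sup' hne (fun i => X i ω) - L) 0) ^ p)
      ≤ 1 + (1/(n:ℝ)) * ∑ i ∈ Finset.Icc 1 n, Real.exp ((X i ω) ^ p) := by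
    intro ω
    have hsumnn : 0 ≤ ∑ i ∈ Finset.Icc 1 n, Real.exp ((X i ω) ^ p) :=
      Finset.sum_nonneg fun i _ => (Real.exp_pos _).le
    rcases le_or_gt ((Finset.Icc 1 n).sup' hne (fun i => X i ω) - L) 0 with h | h
    · rw [max_eq_right h, Real.zero_rpow hp.ne', mul_zero, Real.exp_zero]
      have : 0 ≤ (1/(n:ℝ)) * ∑ i ∈ Finset.Icc 1 n, Real.exp ((X i ω) ^ p) :=
        mul_nonneg (by positivity) hsumnn
      linarith
    · obtain ⟨j, hj, hjS⟩ := Finset.exists_mem_eq_sup' hne (fun i => X i ω)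
      rw [max_eq_left h.le]
      have hXL : L ≤ X j ω := by
        have := hjS ▸ h
        linarith [hjS ▸ h]
      have h1 : ((Finset.Icc 1 n).sup' hne (fun i => X i ω) - L) ^ p ≤ (X j ω) ^ p := by
        apply Real.rpow_le_rpow (by rw [hjS] at h; linarith) _ hp.le
        rw [hjS]; linarith [hLnonneg]
      have h2 : L ^ p ≤ (X j ω) ^ p := Real.rpow_le_rpow hLnonneg hXL hp.le
      have h3 : 1/2 * ((Finset.Icc 1 n).sup' hne (fun i => X i ω) - L) ^ p
          ≤ (X j ω) ^ p - Real.log n := by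
        rw [hLp] at h2; linarith
      calc Real.exp (1/2 * ((Finset.Icc 1 n).sup' hne (fun i => X i ω) - L) ^ p)
          ≤ Real.exp ((X j ω) ^ p - Real.log n) := Real.exp_le_exp.mpr h3
        _ = Real.exp ((X j ω) ^ p) / (n:ℝ) := by
            rw [Real.exp_sub, Real.exp_log hnpos]
        _ ≤ (1/(n:ℝ)) * ∑ i ∈ Finset.Icc 1 n, Real.exp ((X i ω) ^ p) := by
            rw [div_eq_mul_inv, mul_comm, ← one_div]
            apply mul_le_mul_of_nonneg_left _ (by positivity)
            exact Finset.single_le_sum (f := fun i => Real.exp ((X i ω) ^ p)) (fun i _ => (Real.exp_pos _).le) hj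
        _ ≤ 1 + (1/(n:ℝ)) * ∑ i ∈ Finset.Icc 1 n, Real.exp ((X i ω) ^ p) := by linarith
  have hmeas' : ∀ i : ℕ, Measurable fun ω => ENNReal.ofReal (Real.exp ((X i ω) ^ p)) :=
    fun i => ENNReal.measurable_ofReal.comp (Real.measurable_exp.comp ((Real.continuous_rpow_const hp.le).measurable.comp (hmeas i)))
  calc (∫⁻ ω, ENNReal.ofReal (Real.exp (1/2 *
          (max ((Finset.Icc 1 n).sup' hne (fun i => X i ω) - L) 0) ^ p)) ∂μ)
      ≤ ∫⁻ ω, (1 + ENNReal.ofReal (1/(n:ℝ)) *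
          ∑ i ∈ Finset.Icc 1 n, ENNReal.ofReal (Real.exp ((X i ω) ^ p))) ∂μ := by
        apply lintegral_mono
        intro ω
        calc ENNReal.ofReal (Real.exp (1/2 *
              (max ((Finset.Icc 1 n).sup' hne (fun i => X i ω) - L) 0) ^ p))
            ≤ ENNReal.ofReal (1 + (1/(n:ℝ)) *
                ∑ i ∈ Finset.Icc 1 n, Real.exp ((X i ω) ^ p)) :=
              ENNReal.ofReal_le_ofReal (key ω)
          _ = 1 + ENNReal.ofReal ((1/(n:ℝ)) *
                ∑ i ∈ Finset.Icc 1 n, Real.exp ((X i ω) ^ p)) := by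
              rw [ENNReal.ofReal_add (by norm_num)
                (mul_nonneg (by positivity)
                  (Finset.sum_nonneg fun i _ => (Real.exp_pos _).le)),
                ENNReal.ofReal_one]
          _ = 1 + ENNReal.ofReal (1/(n:ℝ)) *
                ∑ i ∈ Finset.Icc 1 n, ENNReal.ofReal (Real.exp ((X i ω) ^ p)) := by
              rw [ENNReal.ofReal_mul (by positivity),
                ENNReal.ofReal_sum_of_nonneg (fun i _ => (Real.exp_pos _).le)]
    _ = 1 + ENNReal.ofReal (1/(n:ℝ)) *
          ∑ i ∈ Finset.Icc 1 n, ∫⁻ ω, ENNReal.ofReal (Real.exp ((X i ω) ^ p)) ∂μ := by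
        rw [lintegral_add_left measurable_const, lintegral_const, measure_univ, mul_one,
          lintegral_const_mul _ (Finset.measurable_sum _ fun i _ => hmeas' i),
          lintegral_finset_sum _ fun i _ => hmeas' i]
    _ ≤ 1 + ENNReal.ofReal (1/(n:ℝ)) * ((Finset.Icc 1 n).card • ENNReal.ofReal C) := by
        gcongr
        exact Finset.sum_le_card_nsmul _ _ _ fun i _ => (hexp i).le
    _ = 1 + ENNReal.ofReal C := by
        rw [Nat.card_Icc]
        simp only [Nat.add_sub_cancel, nsmul_eq_mul]
        rw [← mul_assoc]
        congr 1
        have hne0 : ((n:ENNReal)) ≠ 0 := by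
          exact_mod_cast Nat.pos_of_ne_zero (by omega) |>.ne'
        rw [one_div, ENNReal.ofReal_inv_of_pos hnpos, ENNReal.ofReal_natCast,
          ENNReal.inv_mul_cancel hne0 (ENNReal.natCast_ne_top n), one_mul]
    _ < ENNReal.ofReal (C + 2) := by
        rw [ENNReal.ofReal_add hC.le (by norm_num)]
        rw [add_comm (ENNReal.ofReal C)]
        apply ENNReal.add_lt_add_right ENNReal.ofReal_ne_top
        have h2 : ENNReal.ofReal 2 = 2 := by norm_num
        rw [h2]
        exact ENNReal.one_lt_two
end

section
/- Let d ≥ 1, R > 1, and let ω be a balanced nearest-neighbor environment on ℤ^d with ω(x, x±e_i) ≥ κ > 0 for all x, i. Let η : ℤ^d → [0,1] satisfy η(x) = 1 for all x outside the discrete ball B_{3R}. Then the only bounded function u : ℤ^d → ℝ solving L_ω u = (1/R²) u η on all of ℤ^d is u ≡ 0, where L_ω u(x) = ∑_{y~x} ω(x,y)[u(y) − u(x)]. -/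
open scoped BigOperators

noncomputable def znorm (d : ℕ) (x : Fin d → ℤ) : ℝ :=
  Real.sqrt (∑ i, ((x i : ℝ)) ^ 2)

def lstep (d : ℕ) (x : Fin d → ℤ) (i : Fin d) (b : Bool) : Fin d → ℤ :=
  fun j => if j = i then x j + (if b then 1 else -1) else x j

noncomputable def Lgen (d : ℕ) (ω : (Fin d → ℤ) → Fin d → Bool → ℝ)
    (u : (Fin d → ℤ) → ℝ) (x : Fin d → ℤ) : ℝ :=
  ∑ i : Fin d, ∑ b : Bool, ω x i b * (u (lstep d x i b) - u x)

lemma coord_le_znorm (d : ℕ) (x : Fin d → ℤ) (i : Fin d) :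
    |(x i : ℝ)| ≤ znorm d x := by
  rw [znorm, ← Real.sqrt_sq_eq_abs]
  apply Real.sqrt_le_sqrt
  exact Finset.single_le_sum (f := fun j => ((x j : ℝ)) ^ 2)
    (fun j _ => sq_nonneg _) (Finset.mem_univ i)

lemma aux_nonpos (d : ℕ) (hd : 1 ≤ d) (R : ℝ) (hR : 1 < R)
    (κ : ℝ) (hκ : 0 < κ)
    (ω : (Fin d → ℤ) → Fin d → Bool → ℝ)
    (hell : ∀ x i b, κ ≤ ω x i b)
    (hsum : ∀ x, ∑ i : Fin d, ∑ b : Bool, ω x i b = 1)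
    (η : (Fin d → ℤ) → ℝ)
    (hη0 : ∀ x, 0 ≤ η x)
    (hηout : ∀ x, ¬ znorm d x < 3 * R → η x = 1)
    (u : (Fin d → ℤ) → ℝ)
    (hubdd : ∃ M : ℝ, ∀ x, |u x| ≤ M)
    (heq : ∀ x, Lgen d ω u x = (1 / R ^ 2) * u x * η x) :
    ∀ x, u x ≤ 0 := by
  by_contra hcon
  push_neg at hcon
  obtain ⟨x0, hx0⟩ := hcon
  obtain ⟨M, hM⟩ := hubdd
  set s := sSup (Set.range u) with hs_def
  have hbdd : BddAbove (Set.range u) := ⟨M, by rintro _ ⟨x, rfl⟩; exact (abs_le.mp (hM x)).2⟩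
  have hus : ∀ x, u x ≤ s := fun x => le_csSup hbdd ⟨x, rfl⟩
  have hs : 0 < s := lt_of_lt_of_le hx0 (hus x0)
  have hω0 : ∀ x i b, 0 ≤ ω x i b := fun x i b => le_trans hκ.le (hell x i b)
  have i0 : Fin d := ⟨0, hd⟩
  -- κ ≤ 1
  have hκ1 : κ ≤ 1 := by
    have h1 : ω 0 i0 true ≤ ∑ b : Bool, ω 0 i0 b :=
      Finset.single_le_sum (fun b _ => hω0 0 i0 b) (Finset.mem_univ true)
    have h2 : (∑ b : Bool, ω 0 i0 b) ≤ ∑ i : Fin d, ∑ b : Bool, ω 0 i b :=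
      Finset.single_le_sum (fun i _ => Finset.sum_nonneg fun b _ => hω0 0 i b)
        (Finset.mem_univ i0)
    have := hsum 0
    have := hell 0 i0 true
    linarith
  have hR2 : (0:ℝ) < R ^ 2 := by positivity
  have hR21 : (0:ℝ) < R ^ 2 + 1 := by positivity
  -- expansion of the equation
  have expand : ∀ x, ∑ i : Fin d, ∑ b : Bool, ω x i b * u (lstep d x i b)
      = u x * (1 + η x / R ^ 2) := by
    intro x
    have h := heq x
    rw [Lgen] at h
    have h1 : ∑ i : Fin d, ∑ b : Bool, ω x i b * (u (lstep d x i b) - u x)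
        = (∑ i : Fin d, ∑ b : Bool, ω x i b * u (lstep d x i b))
          - (∑ i : Fin d, ∑ b : Bool, ω x i b) * u x := by
      rw [Finset.sum_mul, ← Finset.sum_sub_distrib]
      congr 1 with i
      rw [Finset.sum_mul, ← Finset.sum_sub_distrib]
      congr 1 with b
      ring
    rw [h1, hsum x, one_mul] at h
    have : (1 / R ^ 2) * u x * η x = u x * (η x / R ^ 2) := by ring
    rw [this] at h
    linarith [h]
  -- bound on sums by s
  have hsum_le : ∀ x, ∑ i : Fin d, ∑ b : Bool, ω x i b * u (lstep d x i b) ≤ s := by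
    intro x
    calc ∑ i : Fin d, ∑ b : Bool, ω x i b * u (lstep d x i b)
        ≤ ∑ i : Fin d, ∑ b : Bool, ω x i b * s := by
          apply Finset.sum_le_sum; intro i _
          apply Finset.sum_le_sum; intro b _
          exact mul_le_mul_of_nonneg_left (hus _) (hω0 x i b)
      _ = (∑ i : Fin d, ∑ b : Bool, ω x i b) * s := by
          rw [Finset.sum_mul]; congr 1 with i; rw [Finset.sum_mul]
      _ = s := by rw [hsum x, one_mul]
  set c := s * R ^ 2 / (R ^ 2 + 1) with hc_def
  have hc0 : 0 < c := by rw [hc_def]; exact div_pos (mul_pos hs hR2) hR21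
  have hcs : c < s := by
    rw [hc_def, div_lt_iff₀ hR21]; nlinarith
  -- outside bound
  have hout : ∀ x, ¬ znorm d x < 3 * R → 0 < u x → u x ≤ c := by
    intro x hx hux
    have h1 := hsum_le x
    rw [expand x, hηout x hx] at h1
    rw [hc_def, le_div_iff₀ hR21]
    have : u x * (1 + 1 / R ^ 2) = u x * (R ^ 2 + 1) / R ^ 2 := by field_simp
    rw [this] at h1
    rw [div_le_iff₀ hR2] at h1
    linarith
  -- key propagation step
  have key : ∀ x, 0 ≤ u x → ∀ i b, s - u (lstep d x i b) ≤ (s - u x) / κ := by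
    intro x hux i b
    have hT : ∑ i' : Fin d, ∑ b' : Bool, ω x i' b' * (s - u (lstep d x i' b'))
        = s - ∑ i' : Fin d, ∑ b' : Bool, ω x i' b' * u (lstep d x i' b') := by
      have h1 : ∑ i' : Fin d, ∑ b' : Bool, ω x i' b' * (s - u (lstep d x i' b'))
          = (∑ i' : Fin d, ∑ b' : Bool, ω x i' b') * s
            - ∑ i' : Fin d, ∑ b' : Bool, ω x i' b' * u (lstep d x i' b') := by
        rw [Finset.sum_mul, ← Finset.sum_sub_distrib]
        congr 1 with i'
        rw [Finset.sum_mul, ← Finset.sum_sub_distrib]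
        congr 1 with b'
        ring
      rw [h1, hsum x, one_mul]
    have hS1 : u x ≤ ∑ i' : Fin d, ∑ b' : Bool, ω x i' b' * u (lstep d x i' b') := by
      rw [expand x]
      have : 0 ≤ u x * (η x / R ^ 2) := mul_nonneg hux (div_nonneg (hη0 x) hR2.le)
      nlinarith
    have hterm : ω x i b * (s - u (lstep d x i b))
        ≤ ∑ i' : Fin d, ∑ b' : Bool, ω x i' b' * (s - u (lstep d x i' b')) := by
      have hnn : ∀ i' b', 0 ≤ ω x i' b' * (s - u (lstep d x i' b')) :=
        fun i' b' => mul_nonneg (hω0 x i' b') (by linarith [hus (lstep d x i' b')])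
      calc ω x i b * (s - u (lstep d x i b))
          ≤ ∑ b' : Bool, ω x i b' * (s - u (lstep d x i b')) :=
            Finset.single_le_sum (fun b' _ => hnn i b') (Finset.mem_univ b)
        _ ≤ ∑ i' : Fin d, ∑ b' : Bool, ω x i' b' * (s - u (lstep d x i' b')) :=
            Finset.single_le_sum
              (fun i' _ => Finset.sum_nonneg fun b' _ => hnn i' b') (Finset.mem_univ i)
    have hκω : κ * (s - u (lstep d x i b)) ≤ ω x i b * (s - u (lstep d x i b)) :=
      mul_le_mul_of_nonneg_right (hell x i b) (by linarith [hus (lstep d x i b)])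
    rw [le_div_iff₀ hκ]
    rw [hT] at hterm
    nlinarith
  -- set up the path
  set N := ⌈6 * R⌉₊ with hN_def
  have hN6R : 6 * R ≤ (N : ℝ) := Nat.le_ceil _
  set δ := (s - c) / 2 with hδ_def
  have hδ0 : 0 < δ := by rw [hδ_def]; linarith
  set ε := δ * κ ^ N with hε_def
  have hκN : 0 < κ ^ N := pow_pos hκ N
  have hε0 : 0 < ε := mul_pos hδ0 hκN
  have hεδ : ε ≤ δ := by
    rw [hε_def]
    nlinarith [pow_le_one₀ hκ.le hκ1 (n := N)]
  obtain ⟨_, ⟨x1, rfl⟩, hx1⟩ :=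
    exists_lt_of_lt_csSup (Set.range_nonempty u) (show s - ε < s by linarith)
  -- x1 is inside the ball
  have hx1in : znorm d x1 < 3 * R := by
    by_contra hxo
    have hux1 : 0 < u x1 := by linarith
    have := hout x1 hxo hux1
    linarith
  have hx1c : -(3 * R) < (x1 i0 : ℝ) := by
    have := coord_le_znorm d x1 i0
    have := abs_lt.mp (lt_of_le_of_lt this hx1in)
    linarith [this.1]
  -- the path
  set z : ℕ → (Fin d → ℤ) := fun k => fun j => if j = i0 then x1 j + (k : ℤ) else x1 j
    with hz_def
  have hz0 : z 0 = x1 := by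
    funext j; simp [hz_def]
  have hzstep : ∀ k, lstep d (z k) i0 true = z (k + 1) := by
    intro k; funext j
    by_cases hj : j = i0 <;> simp [lstep, hz_def, hj] <;> ring
  have hεκ : ∀ k, k ≤ N → ε / κ ^ k ≤ δ := by
    intro k hk
    have h1 : κ ^ N ≤ κ ^ k := pow_le_pow_of_le_one hκ.le hκ1 hk
    have h2 : ε / κ ^ k ≤ ε / κ ^ N := by
      gcongr
    have h3 : ε / κ ^ N = δ := by
      rw [hε_def]; field_simp
    linarith
  have hzk : ∀ k, k ≤ N → s - u (z k) ≤ ε / κ ^ k := by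
    intro k
    induction k with
    | zero =>
      intro _
      rw [hz0, pow_zero, div_one]
      linarith
    | succ k ih =>
      intro hk
      have hk' : k ≤ N := Nat.le_of_succ_le hk
      have ihk := ih hk'
      have huk : 0 ≤ u (z k) := by
        have := hεκ k hk'
        have : s - u (z k) ≤ δ := le_trans ihk this
        rw [hδ_def] at this
        linarith
      have h1 := key (z k) huk i0 true
      rw [hzstep k] at h1
      have h2 : (s - u (z k)) / κ ≤ (ε / κ ^ k) / κ := by gcongr
      have h3 : (ε / κ ^ k) / κ = ε / κ ^ (k + 1) := by
        rw [div_div, pow_succ]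
      linarith
  -- endpoint
  have hend := hzk N le_rfl
  have hεN : ε / κ ^ N = δ := by rw [hε_def]; field_simp
  rw [hεN] at hend
  have huN : c < u (z N) := by rw [hδ_def] at hend; linarith
  have hzNc : (3 : ℝ) * R ≤ ((z N i0 : ℤ) : ℝ) := by
    have : z N i0 = x1 i0 + (N : ℤ) := by simp [hz_def]
    rw [this]
    push_cast
    linarith
  have hzNout : ¬ znorm d (z N) < 3 * R := by
    push_neg
    calc (3:ℝ) * R ≤ ((z N i0 : ℤ) : ℝ) := hzNc
      _ ≤ |((z N i0 : ℤ) : ℝ)| := le_abs_self _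
      _ ≤ znorm d (z N) := coord_le_znorm d (z N) i0
  have := hout (z N) hzNout (lt_trans hc0 huN)
  linarith

/-- The only bounded solution of `L_ω u = (1/R²) u η` on `ℤ^d`, where `η : ℤ^d → [0,1]`
equals `1` outside `B_{3R}` and `ω` is balanced and uniformly elliptic, is `u ≡ 0`. -/
theorem stmt7 (d : ℕ) (hd : 1 ≤ d) (R : ℝ) (hR : 1 < R)
    (κ : ℝ) (hκ : 0 < κ)
    (ω : (Fin d → ℤ) → Fin d → Bool → ℝ)
    (hell : ∀ x i b, κ ≤ ω x i b)
    (hsum : ∀ x, ∑ i : Fin d, ∑ b : Bool, ω x i b = 1)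
    (hbal : ∀ x i, ω x i true = ω x i false)
    (η : (Fin d → ℤ) → ℝ)
    (hη0 : ∀ x, 0 ≤ η x) (hη1 : ∀ x, η x ≤ 1)
    (hηout : ∀ x, ¬ znorm d x < 3 * R → η x = 1)
    (u : (Fin d → ℤ) → ℝ)
    (hubdd : ∃ M : ℝ, ∀ x, |u x| ≤ M)
    (heq : ∀ x, Lgen d ω u x = (1 / R ^ 2) * u x * η x) :
    ∀ x, u x = 0 := by
  have h1 := aux_nonpos d hd R hR κ hκ ω hell hsum η hη0 hηout u hubdd heq
  have hneg : ∀ x, Lgen d ω (fun y => -u y) x = (1 / R ^ 2) * (-u x) * η x := by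
    intro x
    have h2 : Lgen d ω (fun y => -u y) x = - Lgen d ω u x := by
      simp only [Lgen, ← Finset.sum_neg_distrib]
      congr 1 with i
      congr 1 with b
      ring
    rw [h2, heq x]; ring
  obtain ⟨M, hM⟩ := hubdd
  have h2 := aux_nonpos d hd R hR κ hκ ω hell hsum η hη0 hηout (fun y => -u y)
    ⟨M, fun x => by simpa using hM x⟩ hneg
  intro x
  have h3 : -u x ≤ 0 := h2 x
  have h4 := h1 x
  linarith
end

section
/- Let (X_n)_{n≥0} be a martingale in ℤ^d with steps of length 1 started at the origin, and let τ_m = inf{n : X_n ∉ B_{mR}} for integers m ≥ 1 and real R ≥ 1. Then for every k > 0 and integer n_0 ≥ 1, P(τ_{n_0} ≤ k R²) ≤ C √k / n_0 for a constant C depending only on d. -/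
open MeasureTheory
open scoped ENNReal

open scoped NNReal


section Aux

variable {d : ℕ} {Ω : Type} [m : MeasurableSpace Ω] {μ : Measure Ω} [IsProbabilityMeasure μ]
  {ℱ : Filtration ℕ m} {X : ℕ → Ω → EuclideanSpace ℝ (Fin d)}

lemma coord_abs_le_norm (x : EuclideanSpace ℝ (Fin d)) (i : Fin d) : |x i| ≤ ‖x‖ := by
  rw [EuclideanSpace.norm_eq, ← Real.sqrt_sq_eq_abs]
  apply Real.sqrt_le_sqrt
  calc x i ^ 2 = ‖x i‖ ^ 2 := by rw [Real.norm_eq_abs, sq_abs]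
  _ ≤ ∑ j, ‖x j‖ ^ 2 :=
      Finset.single_le_sum (f := fun j => ‖x j‖ ^ 2) (fun j _ => sq_nonneg _) (Finset.mem_univ i)

lemma norm_X_le (h0 : ∀ ω, X 0 ω = 0) (hstep : ∀ n ω, ‖X (n + 1) ω - X n ω‖ = 1) :
    ∀ n ω, ‖X n ω‖ ≤ n := by
  intro n
  induction n with
  | zero => intro ω; simp [h0 ω]
  | succ n ih =>
    intro ω
    have : X (n + 1) ω = X n ω + (X (n + 1) ω - X n ω) := by abel
    rw [this]
    calc ‖X n ω + (X (n + 1) ω - X n ω)‖ ≤ ‖X n ω‖ + ‖X (n + 1) ω - X n ω‖ := norm_add_le _ _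
    _ ≤ n + 1 := by rw [hstep n ω]; linarith [ih ω]
    _ = ((n + 1 : ℕ) : ℝ) := by push_cast; ring

lemma coord_sm (hX : Martingale X ℱ μ) (i : Fin d) (n : ℕ) :
    StronglyMeasurable[ℱ n] fun ω => X n ω i :=
  (EuclideanSpace.proj (𝕜 := ℝ) i).continuous.comp_stronglyMeasurable (hX.stronglyMeasurable n)

lemma coord_integrable (hX : Martingale X ℱ μ) (h0 : ∀ ω, X 0 ω = 0)
    (hstep : ∀ n ω, ‖X (n + 1) ω - X n ω‖ = 1) (i : Fin d) (n : ℕ) :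
    Integrable (fun ω => X n ω i) μ := by
  refine ⟨((coord_sm hX i n).mono (ℱ.le n)).aestronglyMeasurable, ?_⟩
  refine HasFiniteIntegral.of_bounded (C := (n : ℝ)) (ae_of_all _ fun ω => ?_)
  exact le_trans (coord_abs_le_norm _ i) (norm_X_le h0 hstep n ω)

lemma coord_martingale (hX : Martingale X ℱ μ) (h0 : ∀ ω, X 0 ω = 0)
    (hstep : ∀ n ω, ‖X (n + 1) ω - X n ω‖ = 1) (i : Fin d) :
    Martingale (fun n ω => X n ω i) ℱ μ := by
  constructor
  · exact fun n => coord_sm hX i n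
  · intro a b hab
    refine (ae_eq_condExp_of_forall_setIntegral_eq (ℱ.le a)
      (coord_integrable hX h0 hstep i b)
      (fun s _ _ => (coord_integrable hX h0 hstep i a).integrableOn)
      (fun s hs _ => ?_)
      ((coord_sm hX i a).aestronglyMeasurable)).symm
    have h1 : ∫ ω in s, X a ω i ∂μ = (EuclideanSpace.proj (𝕜 := ℝ) i) (∫ ω in s, X a ω ∂μ) := by
      simpa using ContinuousLinearMap.integral_comp_comm (μ := μ.restrict s)
        (EuclideanSpace.proj (𝕜 := ℝ) i) (hX.integrable a).integrableOn
    have h2 : ∫ ω in s, X b ω i ∂μ = (EuclideanSpace.proj (𝕜 := ℝ) i) (∫ ω in s, X b ω ∂μ) := by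
      simpa using ContinuousLinearMap.integral_comp_comm (μ := μ.restrict s)
        (EuclideanSpace.proj (𝕜 := ℝ) i) (hX.integrable b).integrableOn
    rw [h1, h2, hX.setIntegral_eq hab hs]


lemma int_of_bounded {f : Ω → ℝ} (hf : AEStronglyMeasurable f μ) (c : ℝ)
    (hc : ∀ ω, |f ω| ≤ c) : Integrable f μ :=
  ⟨hf, HasFiniteIntegral.of_bounded (C := c) (ae_of_all _ fun ω => hc ω)⟩

lemma coord_sq_integral_le (hX : Martingale X ℱ μ) (h0 : ∀ ω, X 0 ω = 0)
    (hstep : ∀ n ω, ‖X (n + 1) ω - X n ω‖ = 1) (i : Fin d) :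
    ∀ n : ℕ, ∫ ω, (X n ω i) ^ 2 ∂μ ≤ n := by
  intro n
  induction n with
  | zero => simp [h0]
  | succ n ih =>
    set f : Ω → ℝ := fun ω => X n ω i with hf
    set g : Ω → ℝ := fun ω => X (n + 1) ω i - X n ω i with hg
    have hfint : Integrable f μ := coord_integrable hX h0 hstep i n
    have hgint : Integrable g μ := (coord_integrable hX h0 hstep i (n + 1)).sub hfint
    have hfbd : ∀ ω, |f ω| ≤ n := fun ω =>
      (coord_abs_le_norm _ i).trans (norm_X_le h0 hstep n ω)
    have hgbd : ∀ ω, |g ω| ≤ 1 := by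
      intro ω
      have h1 : g ω = (X (n + 1) ω - X n ω) i := by simp [hg]
      rw [h1, ← hstep n ω]
      exact coord_abs_le_norm _ i
    have hfgint : Integrable (f * g) μ := by
      refine int_of_bounded (hfint.aestronglyMeasurable.mul hgint.aestronglyMeasurable)
        ((n : ℝ) * 1) fun ω => ?_
      calc |f ω * g ω| = |f ω| * |g ω| := abs_mul _ _
      _ ≤ (n : ℝ) * 1 := mul_le_mul (hfbd ω) (hgbd ω) (abs_nonneg _) (Nat.cast_nonneg n)
    have hfgint2 : Integrable (fun ω => 2 * (f ω * g ω)) μ := by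
      simpa using hfgint.const_mul 2
    have hf2int : Integrable (fun ω => f ω ^ 2) μ := by
      refine int_of_bounded ?_ ((n : ℝ) ^ 2) fun ω => ?_
      · exact (hfint.aestronglyMeasurable.mul hfint.aestronglyMeasurable).congr
          (ae_of_all _ fun ω => (sq (f ω)).symm)
      · rw [abs_pow]
        exact pow_le_pow_left₀ (abs_nonneg _) (hfbd ω) 2
    have hg2int : Integrable (fun ω => g ω ^ 2) μ := by
      refine int_of_bounded ?_ 1 fun ω => ?_
      · exact (hgint.aestronglyMeasurable.mul hgint.aestronglyMeasurable).congr
          (ae_of_all _ fun ω => (sq (g ω)).symm)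
      · rw [abs_pow]
        simpa using pow_le_pow_left₀ (abs_nonneg _) (hgbd ω) 2
    -- conditional expectation of increment is zero
    have hgce : μ[g|ℱ n] =ᵐ[μ] 0 := by
      have h1 : μ[(fun ω => X (n + 1) ω i)|ℱ n] =ᵐ[μ] f :=
        (coord_martingale hX h0 hstep i).condExp_ae_eq (Nat.le_succ n)
      have h2 : μ[f|ℱ n] = f :=
        condExp_of_stronglyMeasurable (ℱ.le n) (coord_sm hX i n) hfint
      have h3 : μ[g|ℱ n] =ᵐ[μ]
          μ[(fun ω => X (n + 1) ω i)|ℱ n] - μ[f|ℱ n] :=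
        condExp_sub (coord_integrable hX h0 hstep i (n + 1)) hfint (ℱ n)
      refine h3.trans ?_
      rw [h2]
      filter_upwards [h1] with ω hω
      simp [hω]
    have hpull : μ[f * g|ℱ n] =ᵐ[μ] f * μ[g|ℱ n] :=
      condExp_mul_of_stronglyMeasurable_left (coord_sm hX i n) hfgint hgint
    have hcross : ∫ ω, f ω * g ω ∂μ = 0 := by
      have h4 := integral_condExp (μ := μ) (f := f * g) (ℱ.le n)
      have h5 : μ[f * g|ℱ n] =ᵐ[μ] 0 := by
        refine hpull.trans ?_
        filter_upwards [hgce] with ω hω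
        simp only [Pi.mul_apply, Pi.zero_apply] at hω ⊢
        rw [hω, mul_zero]
      calc ∫ ω, f ω * g ω ∂μ = ∫ ω, (f * g) ω ∂μ := rfl
      _ = ∫ ω, (μ[f * g|ℱ n]) ω ∂μ := h4.symm
      _ = ∫ ω, (0 : Ω → ℝ) ω ∂μ := integral_congr_ae h5
      _ = 0 := by simp
    have hg2 : ∫ ω, g ω ^ 2 ∂μ ≤ 1 := by
      calc ∫ ω, g ω ^ 2 ∂μ ≤ ∫ _ω, (1 : ℝ) ∂μ := by
            refine integral_mono hg2int (integrable_const 1) fun ω => ?_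
            rw [← sq_abs]
            simpa using pow_le_pow_left₀ (abs_nonneg _) (hgbd ω) 2
      _ = 1 := by simp
    have hexp : (fun ω => (X (n + 1) ω i) ^ 2)
        = fun ω => f ω ^ 2 + (2 * (f ω * g ω) + g ω ^ 2) := by
      funext ω
      simp only [hf, hg]
      ring
    have h6 : ∫ ω, 2 * (f ω * g ω) ∂μ = 0 := by
      rw [integral_const_mul, hcross, mul_zero]
    have hsum : Integrable (fun ω => 2 * (f ω * g ω) + g ω ^ 2) μ := hfgint2.add hg2int
    rw [hexp, integral_add hf2int hsum, integral_add hfgint2 hg2int, h6, zero_add]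
    push_cast
    linarith

lemma coord_abs_integral_le (hX : Martingale X ℱ μ) (h0 : ∀ ω, X 0 ω = 0)
    (hstep : ∀ n ω, ‖X (n + 1) ω - X n ω‖ = 1) (i : Fin d) (n : ℕ) :
    ∫ ω, |X n ω i| ∂μ ≤ Real.sqrt n := by
  rcases Nat.eq_zero_or_pos n with h | h
  · subst h
    simp [h0]
  · set s := Real.sqrt n with hs
    have hspos : 0 < s := Real.sqrt_pos.mpr (by exact_mod_cast h)
    have hs2 : s ^ 2 = n := Real.sq_sqrt (Nat.cast_nonneg n)
    have habs : Integrable (fun ω => |X n ω i|) μ :=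
      (coord_integrable hX h0 hstep i n).abs
    have hf2int : Integrable (fun ω => (X n ω i) ^ 2 / (2 * s) + s / 2) μ := by
      have h1 : Integrable (fun ω => (X n ω i) ^ 2) μ := by
        refine int_of_bounded ?_ ((n : ℝ) ^ 2) fun ω => ?_
        · exact ((coord_integrable hX h0 hstep i n).aestronglyMeasurable.mul
            (coord_integrable hX h0 hstep i n).aestronglyMeasurable).congr
            (ae_of_all _ fun ω => (sq _).symm)
        · rw [abs_pow]
          exact pow_le_pow_left₀ (abs_nonneg _)
            ((coord_abs_le_norm _ i).trans (norm_X_le h0 hstep n ω)) 2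
      exact (h1.div_const _).add (integrable_const _)
    calc ∫ ω, |X n ω i| ∂μ ≤ ∫ ω, ((X n ω i) ^ 2 / (2 * s) + s / 2) ∂μ := by
          refine integral_mono habs hf2int fun ω => ?_
          have h2s : (0 : ℝ) < 2 * s := by linarith
          have key : 2 * s * |X n ω i| ≤ (X n ω i) ^ 2 + s ^ 2 := by
            nlinarith [sq_nonneg (|X n ω i| - s), sq_abs (X n ω i)]
          calc |X n ω i| = (2 * s * |X n ω i|) / (2 * s) := by field_simp
          _ ≤ ((X n ω i) ^ 2 + s ^ 2) / (2 * s) := by gcongr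
          _ = (X n ω i) ^ 2 / (2 * s) + s / 2 := by field_simp
    _ = (∫ ω, (X n ω i) ^ 2 ∂μ) / (2 * s) + s / 2 := by
          rw [integral_add ((by
            refine int_of_bounded ?_ ((n : ℝ) ^ 2) fun ω => ?_
            · exact ((coord_integrable hX h0 hstep i n).aestronglyMeasurable.mul
                (coord_integrable hX h0 hstep i n).aestronglyMeasurable).congr
                (ae_of_all _ fun ω => (sq _).symm)
            · rw [abs_pow]
              exact pow_le_pow_left₀ (abs_nonneg _)
                ((coord_abs_le_norm _ i).trans (norm_X_le h0 hstep n ω)) 2 :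
              Integrable (fun ω => (X n ω i) ^ 2) μ).div_const _) (integrable_const _),
            integral_div]
          simp
    _ ≤ (n : ℝ) / (2 * s) + s / 2 := by
          have := coord_sq_integral_le hX h0 hstep i n
          have h3 : (0 : ℝ) < 2 * s := by linarith
          gcongr
    _ = s := by
          rw [← hs2]
          field_simp
          ring

end Aux

lemma neg_martingale {Ω : Type} [m : MeasurableSpace Ω] {μ : Measure Ω}
    {ℱ : Filtration ℕ m} {f : ℕ → Ω → ℝ} (hf : Martingale f ℱ μ) :
    Martingale (fun n ω => -(f n ω)) ℱ μ := by
  have h := hf.smul (-1)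
  have e : ((-1 : ℝ) • f) = fun n ω => -(f n ω) := by funext n ω; simp
  rwa [e] at h


set_option maxHeartbeats 1000000 in
/-- Doob-type estimate: for a martingale `(X_n)` in `ℤ^d` with unit steps started at the
origin, `P(τ_{n₀} ≤ k R²) ≤ C √k / n₀`, where `τ_{n₀}` is the exit time from `B_{n₀ R}`
and `C` depends only on `d`. -/
theorem stmt9 (d : ℕ) : ∃ C : ℝ, 0 < C ∧
    ∀ (Ω : Type) [m : MeasurableSpace Ω] (μ : Measure Ω) [IsProbabilityMeasure μ]
      (ℱ : Filtration ℕ m) (X : ℕ → Ω → EuclideanSpace ℝ (Fin d)),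
      Martingale X ℱ μ →
      (∀ ω, X 0 ω = 0) →
      (∀ n ω i, ∃ z : ℤ, X n ω i = z) →
      (∀ n ω, ‖X (n + 1) ω - X n ω‖ = 1) →
      ∀ (R : ℝ), 1 ≤ R → ∀ (k : ℝ), 0 < k → ∀ (n₀ : ℕ), 1 ≤ n₀ →
        μ {ω | ∃ n : ℕ, (n : ℝ) ≤ k * R ^ 2 ∧ (n₀ : ℝ) * R ≤ ‖X n ω‖}
          ≤ ENNReal.ofReal (C * Real.sqrt k / n₀) := by
  refine ⟨2 * (d : ℝ) ^ 2 + 1, by positivity, ?_⟩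
  intro Ω m μ _ ℱ X hX h0 _hint hstep R hR k hk n₀ hn₀
  have hn₀R : (1 : ℝ) ≤ (n₀ : ℝ) * R := by
    have h1 : (1 : ℝ) ≤ (n₀ : ℝ) := by exact_mod_cast hn₀
    nlinarith
  rcases Nat.eq_zero_or_pos d with hd | hd
  · -- dimension zero: the set is empty
    have hempty : {ω | ∃ n : ℕ, (n : ℝ) ≤ k * R ^ 2 ∧ (n₀ : ℝ) * R ≤ ‖X n ω‖} = ∅ := by
      ext ω
      simp only [Set.mem_setOf_eq, Set.mem_empty_iff_false, iff_false, not_exists, not_and]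
      intro n _
      subst hd
      have hz : X n ω = 0 := Subsingleton.elim _ _
      rw [hz, norm_zero]
      intro habs
      linarith
    rw [hempty, measure_empty]
    exact zero_le
  -- main case `1 ≤ d`
  set N : ℕ := ⌊k * R ^ 2⌋₊ with hN
  set ε₀ : ℝ := (n₀ : ℝ) * R / d with hε₀
  have hdpos : (0 : ℝ) < d := by exact_mod_cast hd
  have hε₀pos : 0 < ε₀ := by
    rw [hε₀]; positivity
  set ε : ℝ≥0 := Real.toNNReal ε₀ with hε
  have hεcoe : (ε : ℝ) = ε₀ := Real.coe_toNNReal _ hε₀pos.le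
  have hεne : (ε : ℝ≥0∞) ≠ 0 := by
    simp only [ne_eq, ENNReal.coe_eq_zero]
    intro h
    rw [h] at hεcoe
    simp at hεcoe
    linarith
  -- the 2d directed coordinate processes
  set Z : Fin d × Bool → ℕ → Ω → ℝ :=
    fun p n ω => if p.2 then X n ω p.1 else -(X n ω p.1) with hZ
  have hZmart : ∀ p, Martingale (Z p) ℱ μ := by
    rintro ⟨i, b⟩
    cases b
    · exact neg_martingale (coord_martingale hX h0 hstep i)
    · exact coord_martingale hX h0 hstep i
  set F : Fin d × Bool → ℕ → Ω → ℝ := fun p n ω => max (Z p n ω) 0 with hF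
  have hZsub : ∀ p, Submartingale (F p) ℱ μ := fun p => ((hZmart p).submartingale).pos
  have hFnonneg : ∀ p, (0 : ℕ → Ω → ℝ) ≤ F p := fun p =>
    Pi.le_def.mpr fun n => Pi.le_def.mpr fun ω => le_max_right _ _
  set S : Fin d × Bool → Set Ω := fun p =>
    {ω | (ε : ℝ) ≤ (Finset.range (N + 1)).sup' Finset.nonempty_range_add_one
      fun j => F p j ω} with hS
  -- per-direction bound
  have hkey : ∀ p, μ (S p) ≤ ENNReal.ofReal (Real.sqrt k * R / ε₀) := by
    intro p
    have hmax := maximal_ineq (μ := μ) (hZsub p) (hFnonneg p) (ε := ε) N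
    have habsle : ∫ ω, F p N ω ∂μ ≤ Real.sqrt k * R := by
      have h1 : ∫ ω, F p N ω ∂μ ≤ ∫ ω, |X N ω p.1| ∂μ := by
        refine integral_mono ((hZsub p).integrable N)
          ((coord_integrable hX h0 hstep p.1 N).abs) fun ω => ?_
        refine max_le ?_ (abs_nonneg _)
        rcases p with ⟨i, b⟩
        cases b <;> simp [hZ, abs_nonneg, le_abs_self, neg_le_abs]
      refine h1.trans ((coord_abs_integral_le hX h0 hstep p.1 N).trans ?_)
      have h3 : (N : ℝ) ≤ k * R ^ 2 := Nat.floor_le (by positivity)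
      calc Real.sqrt N ≤ Real.sqrt (k * R ^ 2) := Real.sqrt_le_sqrt h3
      _ = Real.sqrt k * R := by
          rw [Real.sqrt_mul hk.le, Real.sqrt_sq (by linarith)]
    have hset : ∫ ω in S p, F p N ω ∂μ ≤ ∫ ω, F p N ω ∂μ :=
      setIntegral_le_integral ((hZsub p).integrable N)
        (ae_of_all _ fun ω => le_max_right _ _)
    have h4 : (ε : ℝ≥0∞) * μ (S p) ≤ ENNReal.ofReal (Real.sqrt k * R) := by
      calc (ε : ℝ≥0∞) * μ (S p) = ε • μ (S p) := rfl
      _ ≤ ENNReal.ofReal (∫ ω in S p, F p N ω ∂μ) := hmax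
      _ ≤ ENNReal.ofReal (Real.sqrt k * R) :=
          ENNReal.ofReal_le_ofReal (hset.trans habsle)
    have h5 : μ (S p) ≤ ENNReal.ofReal (Real.sqrt k * R) / (ε : ℝ≥0∞) :=
      (ENNReal.le_div_iff_mul_le (Or.inl hεne) (Or.inl ENNReal.coe_ne_top)).mpr
        (by rwa [mul_comm])
    refine h5.trans_eq ?_
    rw [ENNReal.ofReal_div_of_pos hε₀pos]
    congr 1
  -- inclusion of the event in the union
  have hincl : {ω | ∃ n : ℕ, (n : ℝ) ≤ k * R ^ 2 ∧ (n₀ : ℝ) * R ≤ ‖X n ω‖}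
      ⊆ ⋃ p, S p := by
    rintro ω ⟨n, hn1, hn2⟩
    have hnN : n ≤ N := Nat.le_floor hn1
    -- find a coordinate with large absolute value
    have hex : ∃ i : Fin d, ε₀ ≤ |X n ω i| := by
      by_contra hcon
      push_neg at hcon
      have hlt : ∑ j, ‖X n ω j‖ ^ 2 < (d : ℝ) * ε₀ ^ 2 := by
        have hne : (Finset.univ : Finset (Fin d)).Nonempty :=
          ⟨⟨0, hd⟩, Finset.mem_univ _⟩
        calc ∑ j, ‖X n ω j‖ ^ 2 < ∑ _j : Fin d, ε₀ ^ 2 := by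
              refine Finset.sum_lt_sum_of_nonempty hne fun j _ => ?_
              rw [Real.norm_eq_abs]
              exact pow_lt_pow_left₀ (hcon j) (abs_nonneg _) two_ne_zero
        _ = (d : ℝ) * ε₀ ^ 2 := by
              rw [Finset.sum_const, Finset.card_univ, Fintype.card_fin, nsmul_eq_mul]
      have hnrm : ‖X n ω‖ < (n₀ : ℝ) * R := by
        rw [EuclideanSpace.norm_eq]
        have h6 : Real.sqrt (∑ j, ‖X n ω j‖ ^ 2) < Real.sqrt ((d : ℝ) * ε₀ ^ 2) :=
          Real.sqrt_lt_sqrt (Finset.sum_nonneg fun j _ => sq_nonneg _) hlt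
        refine h6.trans_le ?_
        rw [Real.sqrt_mul (by positivity), Real.sqrt_sq hε₀pos.le]
        have hd1 : (1 : ℝ) ≤ d := by exact_mod_cast hd
        have h7 : Real.sqrt d ≤ d := by
          have : Real.sqrt d ≤ Real.sqrt ((d : ℝ) * d) :=
            Real.sqrt_le_sqrt (by nlinarith)
          rwa [Real.sqrt_mul_self hdpos.le] at this
        calc Real.sqrt d * ε₀ ≤ (d : ℝ) * ε₀ := by
              exact mul_le_mul_of_nonneg_right h7 hε₀pos.le
        _ = (n₀ : ℝ) * R := by
              rw [hε₀]
              field_simp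
      linarith
    obtain ⟨i, hi⟩ := hex
    rcases le_abs.mp hi with hpos | hneg
    · refine Set.mem_iUnion.mpr ⟨(i, true), ?_⟩
      simp only [hS, Set.mem_setOf_eq]
      refine le_trans (le_of_eq hεcoe) ?_
      refine le_trans ?_ (Finset.le_sup'
        (f := fun j => F (i, true) j ω)
        (Finset.mem_range.mpr (Nat.lt_succ_of_le hnN)))
      calc ε₀ ≤ Z (i, true) n ω := by simpa [hZ] using hpos
      _ ≤ F (i, true) n ω := le_max_left _ _
    · refine Set.mem_iUnion.mpr ⟨(i, false), ?_⟩
      simp only [hS, Set.mem_setOf_eq]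
      refine le_trans (le_of_eq hεcoe) ?_
      refine le_trans ?_ (Finset.le_sup'
        (f := fun j => F (i, false) j ω)
        (Finset.mem_range.mpr (Nat.lt_succ_of_le hnN)))
      calc ε₀ ≤ Z (i, false) n ω := by simpa [hZ] using hneg
      _ ≤ F (i, false) n ω := le_max_left _ _
  -- put it all together
  calc μ {ω | ∃ n : ℕ, (n : ℝ) ≤ k * R ^ 2 ∧ (n₀ : ℝ) * R ≤ ‖X n ω‖}
      ≤ μ (⋃ p, S p) := measure_mono hincl
  _ ≤ ∑' p : Fin d × Bool, μ (S p) := measure_iUnion_le _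
  _ ≤ ∑' _p : Fin d × Bool, ENNReal.ofReal (Real.sqrt k * R / ε₀) :=
      ENNReal.tsum_le_tsum fun p => hkey p
  _ = (d * 2 : ℕ) * ENNReal.ofReal (Real.sqrt k * R / ε₀) := by
      rw [tsum_fintype, Finset.sum_const, Finset.card_univ]
      simp [Fintype.card_prod, nsmul_eq_mul]
  _ = ENNReal.ofReal ((d * 2 : ℕ) * (Real.sqrt k * R / ε₀)) := by
      rw [ENNReal.ofReal_mul (by positivity), ENNReal.ofReal_natCast]
  _ ≤ ENNReal.ofReal ((2 * (d : ℝ) ^ 2 + 1) * Real.sqrt k / n₀) := by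
      refine ENNReal.ofReal_le_ofReal ?_
      have hR0 : R ≠ 0 := by linarith
      have hn₀0 : ((n₀ : ℝ)) ≠ 0 := by
        have : (1 : ℝ) ≤ (n₀ : ℝ) := by exact_mod_cast hn₀
        linarith
      have heq : ((d * 2 : ℕ) : ℝ) * (Real.sqrt k * R / ε₀)
          = 2 * (d : ℝ) ^ 2 * Real.sqrt k / n₀ := by
        rw [hε₀]
        push_cast
        field_simp
      rw [heq]
      gcongr
      linarith
end

section
/- Suppose T is a stopping time for a Markov chain (X_n) on ℤ^d (on a fixed environment) such that for stopping times τ_k = inf{n : X_n ∉ B_{kR}(x)} one has P^x(τ_k < T) ≤ C e^{−ck} for all k ≥ 1, and E^z[τ_k] ≤ (k+1)² R² for all z ∈ B_{kR}(x). Then E^x[T] ≤ C' R² for a constant C' depending only on c, C. -/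
set_option maxHeartbeats 1000000


open MeasureTheory
open scoped ENNReal NNReal

section helpers
variable {p : ℕ → Prop}

lemma enat_iInf_le {n : ℕ} (hn : p n) : (⨅ m : {m // p m}, (m.1 : ℕ∞)) ≤ n :=
  iInf_le _ (⟨n, hn⟩ : {m // p m})

lemma le_enat_iInf {a : ℕ∞} (h : ∀ n, p n → a ≤ n) : a ≤ ⨅ m : {m // p m}, (m.1 : ℕ∞) :=
  le_iInf fun m => h m.1 m.2

lemma enat_iInf_empty (h : ¬ ∃ n, p n) : (⨅ m : {m // p m}, (m.1 : ℕ∞)) = ⊤ := by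
  haveI : IsEmpty {m // p m} := ⟨fun m => h ⟨m.1, m.2⟩⟩
  exact iInf_of_empty _

lemma enat_iInf_spec (h : ∃ n, p n) :
    p ((⨅ m : {m // p m}, (m.1 : ℕ∞)).toNat) ∧ (⨅ m : {m // p m}, (m.1 : ℕ∞)) ≠ ⊤ := by
  classical
  have hfind : (⨅ m : {m // p m}, (m.1 : ℕ∞)) = (Nat.find h : ℕ∞) :=
    le_antisymm (enat_iInf_le (Nat.find_spec h))
      (le_enat_iInf fun n hn => by exact_mod_cast Nat.find_min' h hn)
  rw [hfind]
  refine ⟨?_, by simp⟩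
  simpa using Nat.find_spec h

lemma enat_iInf_toENNReal [DecidablePred p] :
    ENat.toENNReal (⨅ m : {m // p m}, (m.1 : ℕ∞)) = ⨅ n : ℕ, if p n then (n : ℝ≥0∞) else ⊤ := by
  by_cases h : ∃ n, p n
  · classical
    have hfind : (⨅ m : {m // p m}, (m.1 : ℕ∞)) = (Nat.find h : ℕ∞) :=
      le_antisymm (enat_iInf_le (Nat.find_spec h))
        (le_enat_iInf fun n hn => by exact_mod_cast Nat.find_min' h hn)
    rw [hfind, ENat.toENNReal_coe]
    refine le_antisymm (le_iInf fun n => ?_)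
      (le_trans (iInf_le _ (Nat.find h)) (le_of_eq (if_pos (Nat.find_spec h))))
    by_cases hn : p n
    · rw [if_pos hn]; exact_mod_cast Nat.find_min' h hn
    · rw [if_neg hn]; exact le_top
  · rw [enat_iInf_empty h, ENat.toENNReal_top]
    refine le_antisymm (le_iInf fun n => ?_) le_top
    rw [if_neg (fun hn => h ⟨n, hn⟩)]
end helpers

noncomputable def zdist (d : ℕ) (x y : Fin d → ℤ) : ℝ :=
  Real.sqrt (∑ i, ((x i - y i : ℤ) : ℝ) ^ 2)

lemma zdist_eq (d : ℕ) (a b : Fin d → ℤ) :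
    zdist d a b = dist (α := EuclideanSpace ℝ (Fin d)) (WithLp.toLp 2 (fun i => (a i : ℝ))) (WithLp.toLp 2 (fun i => (b i : ℝ))) := by
  rw [EuclideanSpace.dist_eq, zdist]
  congr 1
  refine Finset.sum_congr rfl fun i _ => ?_
  rw [Real.dist_eq, sq_abs, PiLp.toLp_apply, PiLp.toLp_apply]
  push_cast
  ring

lemma zdist_nonneg (d : ℕ) (a b : Fin d → ℤ) : 0 ≤ zdist d a b := Real.sqrt_nonneg _

lemma zdist_self (d : ℕ) (a : Fin d → ℤ) : zdist d a a = 0 := by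
  rw [zdist_eq]; simp

lemma zdist_triangle (d : ℕ) (a b e : Fin d → ℤ) :
    zdist d a e ≤ zdist d a b + zdist d b e := by
  rw [zdist_eq, zdist_eq, zdist_eq]; exact dist_triangle _ _ _

lemma measurableSet_latt {d : ℕ} (s : Set (Fin d → ℤ)) : MeasurableSet s :=
  s.to_countable.measurableSet

lemma measurable_of_latt {d : ℕ} {α : Type*} [MeasurableSpace α] {β : Type*} [MeasurableSpace β]
    {g : α → Fin d → ℤ} (hg : Measurable g) (f : (Fin d → ℤ) → β) : Measurable (f ∘ g) :=
  fun s _ => hg (measurableSet_latt (f ⁻¹' s))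

/-- If `T` is a stopping time for a Markov chain `(X_n)` on `ℤ^d` such that
`P^x(τ_k < T) ≤ C e^{-ck}` and `E^z[τ_k] ≤ (k+1)² R²` for `z ∈ B_{kR}(x)`, where
`τ_k` is the exit time from `B_{kR}(x)`, then `E^x[T] ≤ C' R²` with `C' = C'(c, C)`.
The chain is encoded by a family of path measures `P z` (started at `z`, with
nearest-neighbor steps), and the strong Markov property at the times `τ_k`, jointly with
the stopping-time property of `T`, is taken as a hypothesis. -/
theorem stmt10 (c C : ℝ) (hc : 0 < c) (hC : 0 < C) :
    ∃ C' : ℝ, 0 < C' ∧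
    ∀ (d : ℕ) (R : ℝ), 1 ≤ R → ∀ (x : Fin d → ℤ)
      (P : (Fin d → ℤ) → Measure (ℕ → (Fin d → ℤ)))
      [∀ z, IsProbabilityMeasure (P z)]
      (T : (ℕ → (Fin d → ℤ)) → ℕ∞),
      -- exit times from the balls B_{kR}(x)
      let τ : ℕ → (ℕ → (Fin d → ℤ)) → ℕ∞ := fun k ω =>
        ⨅ n : {n : ℕ // (k : ℝ) * R ≤ zdist d (ω n) x}, (n.1 : ℕ∞)
      -- the chain starts at z under P z
      (∀ z, (P z) {ω | ω 0 = z} = 1) →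
      -- nearest-neighbor steps
      (∀ z, ∀ᵐ ω ∂ P z, ∀ n, zdist d (ω (n + 1)) (ω n) ≤ 1) →
      -- strong Markov property at τ_k on the event {τ_k < T} (T a stopping time)
      (∀ (z : Fin d → ℤ) (k : ℕ) (g : (ℕ → (Fin d → ℤ)) → ℝ≥0∞), Measurable g →
        (∫⁻ ω, (if τ k ω < ⊤ ∧ τ k ω < T ω
            then g (fun n => ω (n + (τ k ω).toNat)) else 0) ∂ P z)
          = ∫⁻ ω, (if τ k ω < ⊤ ∧ τ k ω < T ω
            then ∫⁻ ω', g ω' ∂ P (ω ((τ k ω).toNat)) else 0) ∂ P z) →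
      -- hypothesis: P^x(τ_k < T) ≤ C e^{-ck}
      (∀ k : ℕ, 1 ≤ k →
        (P x) {ω | τ k ω < T ω} ≤ ENNReal.ofReal (C * Real.exp (-c * k))) →
      -- hypothesis: E^z[τ_k] ≤ (k+1)² R² for z ∈ B_{kR}(x)
      (∀ (z : Fin d → ℤ) (k : ℕ), zdist d z x < (k : ℝ) * R →
        (∫⁻ ω, ENat.toENNReal (τ k ω) ∂ P z)
          ≤ ENNReal.ofReal (((k : ℝ) + 1) ^ 2 * R ^ 2)) →
      (∫⁻ ω, ENat.toENNReal (T ω) ∂ P x) ≤ ENNReal.ofReal (C' * R ^ 2) := by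
  classical
  set r : ℝ := Real.exp (-c) with hr_def
  have hr0 : 0 < r := Real.exp_pos _
  have hr1 : r < 1 := by
    rw [hr_def, Real.exp_lt_one_iff]; linarith
  have hrnorm : ‖r‖ < 1 := by rwa [Real.norm_eq_abs, abs_of_pos hr0]
  -- the series
  set S : ℝ := ∑' j : ℕ, ((j : ℝ) + 3) ^ 2 * r ^ (j + 1) with hS_def
  have hsummable : Summable (fun j : ℕ => ((j : ℝ) + 3) ^ 2 * r ^ (j + 1)) := by
    have h2 : Summable (fun j : ℕ => r * ((j : ℝ) ^ 2 * r ^ j)) :=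
      (summable_pow_mul_geometric_of_norm_lt_one 2 hrnorm).mul_left r
    have h1 : Summable (fun j : ℕ => (6 * r) * ((j : ℝ) ^ 1 * r ^ j)) :=
      (summable_pow_mul_geometric_of_norm_lt_one 1 hrnorm).mul_left (6 * r)
    have h0 : Summable (fun j : ℕ => (9 * r) * r ^ j) :=
      (summable_geometric_of_norm_lt_one hrnorm).mul_left (9 * r)
    refine ((h2.add h1).add h0).congr fun j => ?_
    ring
  have hSnonneg : 0 ≤ S := tsum_nonneg fun j => by positivity
  refine ⟨4 + C * S, by positivity, ?_⟩
  intro d R hR x P hP T τ h0 hstep hSM hPtau hEtau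
  have hR0 : (0 : ℝ) < R := lt_of_lt_of_le one_pos hR
  set μ := P x with hμ_def
  -- basic facts about τ
  have hτdef : ∀ k (ω : ℕ → Fin d → ℤ),
      τ k ω = ⨅ n : {n : ℕ // (k : ℝ) * R ≤ zdist d (ω n) x}, (n.1 : ℕ∞) := fun _ _ => rfl
  -- monotonicity in k
  have hτmono : ∀ (ω : ℕ → Fin d → ℤ) (j k : ℕ), j ≤ k → τ j ω ≤ τ k ω := by
    intro ω j k hjk
    rw [hτdef, hτdef]
    refine le_enat_iInf fun n hn => enat_iInf_le ?_
    exact le_trans (mul_le_mul_of_nonneg_right (by exact_mod_cast hjk) hR0.le) hn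
  -- before exit, one is inside the ball
  have hbefore : ∀ (k : ℕ) (ω : ℕ → Fin d → ℤ) (n : ℕ),
      (n : ℕ∞) < τ k ω → zdist d (ω n) x < (k : ℝ) * R := by
    intro k ω n hn
    by_contra hcon
    rw [not_lt] at hcon
    exact absurd (le_trans (by rw [hτdef]; exact enat_iInf_le hcon) le_rfl) (not_le.2 hn)
  -- the shift inequality
  have hshift : ∀ (k : ℕ) (ω : ℕ → Fin d → ℤ), τ k ω ≠ ⊤ →
      τ (k + 1) ω ≤ τ k ω + τ (k + 1) (fun n => ω (n + (τ k ω).toNat)) := by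
    intro k ω htop
    set θ : ℕ → Fin d → ℤ := fun n => ω (n + (τ k ω).toNat) with hθ_def
    have hτθ : τ (k + 1) θ
        = ⨅ n : {n : ℕ // ((k + 1 : ℕ) : ℝ) * R ≤ zdist d (θ n) x}, (n.1 : ℕ∞) := hτdef _ _
    by_cases h : ∃ n, ((k + 1 : ℕ) : ℝ) * R ≤ zdist d (θ n) x
    · obtain ⟨hspec, hne⟩ :=
        enat_iInf_spec (p := fun n => ((k + 1 : ℕ) : ℝ) * R ≤ zdist d (θ n) x) h
      rw [← hτθ] at hspec hne
      have hle : τ (k + 1) ω ≤ ((((τ (k + 1) θ).toNat + (τ k ω).toNat : ℕ)) : ℕ∞) := by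
        rw [hτdef]
        exact enat_iInf_le hspec
      refine le_trans hle ?_
      rw [Nat.cast_add, ENat.coe_toNat hne, ENat.coe_toNat htop, add_comm]
    · have : τ (k + 1) θ = ⊤ := by
        rw [hτθ]
        exact enat_iInf_empty h
      rw [this, add_top]
      exact le_top
  -- lower bound k ≤ τ k under the a.e. good event
  have hgood_dist : ∀ (ω : ℕ → Fin d → ℤ), ω 0 = x →
      (∀ n, zdist d (ω (n + 1)) (ω n) ≤ 1) → ∀ n, zdist d (ω n) x ≤ n := by
    intro ω h00 hst n
    induction n with
    | zero => rw [h00, zdist_self]; simp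
    | succ n ih =>
      calc zdist d (ω (n + 1)) x ≤ zdist d (ω (n + 1)) (ω n) + zdist d (ω n) x :=
            zdist_triangle _ _ _ _
        _ ≤ 1 + n := add_le_add (hst n) ih
        _ = ((n + 1 : ℕ) : ℝ) := by push_cast; ring
  have hτ_lb : ∀ (ω : ℕ → Fin d → ℤ), ω 0 = x →
      (∀ n, zdist d (ω (n + 1)) (ω n) ≤ 1) → ∀ k : ℕ, (k : ℕ∞) ≤ τ k ω := by
    intro ω h00 hst k
    rw [hτdef]
    refine le_enat_iInf fun n hn => ?_
    have h1 : (k : ℝ) * R ≤ n := le_trans hn (hgood_dist ω h00 hst n)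
    have h2 : (k : ℝ) ≤ (k : ℝ) * R := le_mul_of_one_le_right (Nat.cast_nonneg k) hR
    exact_mod_cast (by exact_mod_cast le_trans h2 h1 : (k : ℝ) ≤ (n : ℝ))
  -- τ k ≥ 1 for k ≥ 1 when ω starts at x
  have hτ_pos : ∀ (ω : ℕ → Fin d → ℤ), ω 0 = x → ∀ k : ℕ, 1 ≤ k → (1 : ℕ∞) ≤ τ k ω := by
    intro ω h00 k hk
    rw [hτdef]
    refine le_enat_iInf fun n hn => ?_
    rcases Nat.eq_zero_or_pos n with h | h
    · exfalso
      rw [h, h00, zdist_self] at hn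
      have : (0 : ℝ) < (k : ℝ) * R := by
        have : (1 : ℝ) ≤ (k : ℝ) := by exact_mod_cast hk
        nlinarith
      linarith
    · exact_mod_cast h
  -- position at exit time
  have hexit_pos : ∀ (ω : ℕ → Fin d → ℤ), ω 0 = x →
      (∀ n, zdist d (ω (n + 1)) (ω n) ≤ 1) → ∀ k : ℕ, 1 ≤ k → τ k ω ≠ ⊤ →
      zdist d (ω ((τ k ω).toNat)) x < ((k : ℝ) + 1) * R := by
    intro ω h00 hst k hk htop
    set t := (τ k ω).toNat with ht_def
    have htτ : (t : ℕ∞) = τ k ω := ENat.coe_toNat htop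
    have ht1 : 1 ≤ t := by
      have := hτ_pos ω h00 k hk
      rw [← htτ] at this
      exact_mod_cast this
    have hprev : ((t - 1 : ℕ) : ℕ∞) < τ k ω := by
      rw [← htτ]
      exact_mod_cast Nat.sub_lt (lt_of_lt_of_le one_pos ht1) one_pos
    have hd1 : zdist d (ω (t - 1)) x < (k : ℝ) * R := hbefore k ω (t - 1) hprev
    have hsucc : t - 1 + 1 = t := Nat.succ_pred_eq_of_pos (lt_of_lt_of_le one_pos ht1)
    calc zdist d (ω t) x ≤ zdist d (ω t) (ω (t - 1)) + zdist d (ω (t - 1)) x :=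
          zdist_triangle _ _ _ _
      _ < 1 + (k : ℝ) * R := by
          refine add_lt_add_of_le_of_lt ?_ hd1
          have := hst (t - 1)
          rwa [hsucc] at this
      _ ≤ ((k : ℝ) + 1) * R := by nlinarith
  -- measurability of ENat.toENNReal ∘ τ k
  have hτE_meas : ∀ k, Measurable (fun ω : ℕ → Fin d → ℤ => ENat.toENNReal (τ k ω)) := by
    intro k
    have heq : (fun ω : ℕ → Fin d → ℤ => ENat.toENNReal (τ k ω))
        = fun ω => ⨅ n : ℕ, if (k : ℝ) * R ≤ zdist d (ω n) x then (n : ℝ≥0∞) else ⊤ := by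
      funext ω
      rw [hτdef]
      exact enat_iInf_toENNReal
    rw [heq]
    refine Measurable.iInf fun n => ?_
    exact measurable_of_latt (measurable_pi_apply n)
      (fun z => if (k : ℝ) * R ≤ zdist d z x then (n : ℝ≥0∞) else ⊤)
  -- the a.e. good event
  have hgood : ∀ᵐ ω ∂μ, ω 0 = x ∧ ∀ n, zdist d (ω (n + 1)) (ω n) ≤ 1 := by
    have h1 : ∀ᵐ ω ∂μ, ω 0 = x := by
      have hms : MeasurableSet {ω : ℕ → Fin d → ℤ | ω 0 = x} := by
        have : MeasurableSet ((fun ω : ℕ → Fin d → ℤ => ω 0) ⁻¹' {x}) :=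
          measurable_pi_apply 0 (measurableSet_latt {x})
        exact this
      rw [ae_iff]
      have : {ω : ℕ → Fin d → ℤ | ¬ ω 0 = x} = {ω : ℕ → Fin d → ℤ | ω 0 = x}ᶜ := rfl
      rw [this, measure_compl hms (measure_ne_top μ _), h0 x]
      simp
    exact h1.and (hstep x)
  -- the step bound for the Markov part
  set B : ℕ → ℝ≥0∞ := fun k =>
    ENNReal.ofReal (((k : ℝ) + 2) ^ 2 * R ^ 2 * (C * Real.exp (-c * (k : ℝ)))) with hB_def
  have hstepbound : ∀ k : ℕ, 1 ≤ k →
      (∫⁻ ω, (if τ k ω < ⊤ ∧ τ k ω < T ω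
          then ENat.toENNReal (τ (k + 1) (fun n => ω (n + (τ k ω).toNat))) else 0) ∂μ)
        ≤ B k := by
    intro k hk
    have hg : Measurable (fun ω' : ℕ → Fin d → ℤ => ENat.toENNReal (τ (k + 1) ω')) :=
      hτE_meas (k + 1)
    rw [hμ_def, hSM x k _ hg]
    have hbd : ∀ᵐ ω ∂ P x, (if τ k ω < ⊤ ∧ τ k ω < T ω
        then ∫⁻ ω', ENat.toENNReal (τ (k + 1) ω') ∂ P (ω ((τ k ω).toNat)) else 0)
        ≤ (if τ k ω < ⊤ ∧ τ k ω < T ω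
          then ENNReal.ofReal (((k : ℝ) + 2) ^ 2 * R ^ 2) else 0) := by
      rw [← hμ_def]
      filter_upwards [hgood] with ω hω
      by_cases hcond : τ k ω < ⊤ ∧ τ k ω < T ω
      · rw [if_pos hcond, if_pos hcond]
        have hz : zdist d (ω ((τ k ω).toNat)) x < ((k + 1 : ℕ) : ℝ) * R := by
          have h1 := hexit_pos ω hω.1 hω.2 k hk hcond.1.ne
          have h2 : ((k + 1 : ℕ) : ℝ) = (k : ℝ) + 1 := by push_cast; ring
          rw [h2]
          exact h1
        refine le_trans (hEtau _ (k + 1) hz) ?_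
        refine ENNReal.ofReal_le_ofReal (le_of_eq ?_)
        push_cast
        ring
      · rw [if_neg hcond, if_neg hcond]
    refine le_trans (lintegral_mono_ae (by rw [← hμ_def] at hbd ⊢; exact hbd)) ?_
    set A := {ω : ℕ → Fin d → ℤ | τ k ω < T ω} with hA_def
    set H := toMeasurable (P x) A with hH_def
    have hmono2 : ∀ ω, (if τ k ω < ⊤ ∧ τ k ω < T ω
        then ENNReal.ofReal (((k : ℝ) + 2) ^ 2 * R ^ 2) else 0)
        ≤ Set.indicator H (fun _ => ENNReal.ofReal (((k : ℝ) + 2) ^ 2 * R ^ 2)) ω := by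
      intro ω
      by_cases hcond : τ k ω < ⊤ ∧ τ k ω < T ω
      · have hmem : ω ∈ H := subset_toMeasurable (P x) A hcond.2
        rw [if_pos hcond, Set.indicator_of_mem hmem]
      · rw [if_neg hcond]; exact zero_le
    refine le_trans (lintegral_mono hmono2) ?_
    rw [lintegral_indicator (measurableSet_toMeasurable _ _), setLIntegral_const,
      measure_toMeasurable]
    calc ENNReal.ofReal (((k : ℝ) + 2) ^ 2 * R ^ 2) * (P x) A
        ≤ ENNReal.ofReal (((k : ℝ) + 2) ^ 2 * R ^ 2)
            * ENNReal.ofReal (C * Real.exp (-c * (k : ℝ))) := by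
          refine mul_le_mul_right ?_ _
          exact hPtau k hk
      _ = B k := by
          rw [hB_def, ← ENNReal.ofReal_mul (by positivity)]
  -- pass to simple functions below T
  rw [lintegral_eq_nnreal]
  refine iSup₂_le fun φ hφ => ?_
  have hφE_meas : Measurable (fun ω : ℕ → Fin d → ℤ => ((φ ω : ℝ≥0) : ℝ≥0∞)) :=
    φ.measurable.coe_nnreal_ennreal
  set ψ : ℕ → (ℕ → Fin d → ℤ) → ℝ≥0∞ :=
    fun k ω => min ((φ ω : ℝ≥0) : ℝ≥0∞) (ENat.toENNReal (τ k ω)) with hψ_def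
  have hψ_meas : ∀ k, Measurable (ψ k) := fun k => hφE_meas.min (hτE_meas k)
  have hψ_mono : Monotone ψ := by
    intro a b hab ω
    exact min_le_min le_rfl (ENat.toENNReal_mono (hτmono ω a b hab))
  -- pointwise recursion step
  have hpt : ∀ k ω, ψ (k + 1) ω ≤ ψ k ω +
      (if τ k ω < ⊤ ∧ τ k ω < T ω
        then ENat.toENNReal (τ (k + 1) (fun n => ω (n + (τ k ω).toNat))) else 0) := by
    intro k ω
    by_cases hφτ : ((φ ω : ℝ≥0) : ℝ≥0∞) ≤ ENat.toENNReal (τ k ω)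
    · have hψk : ψ k ω = ((φ ω : ℝ≥0) : ℝ≥0∞) := min_eq_left hφτ
      rw [hψk]
      exact le_trans (min_le_left _ _) le_self_add
    · push_neg at hφτ
      have hψk : ψ k ω = ENat.toENNReal (τ k ω) := min_eq_right hφτ.le
      have hcond : τ k ω < ⊤ ∧ τ k ω < T ω := by
        have h1 : ENat.toENNReal (τ k ω) < ENat.toENNReal (T ω) := lt_of_lt_of_le hφτ (hφ ω)
        have h2 : ENat.toENNReal (τ k ω) < ENat.toENNReal ⊤ := by
          rw [ENat.toENNReal_top]
          exact hφτ.trans ENNReal.coe_lt_top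
        exact ⟨ENat.toENNReal_lt.mp h2, ENat.toENNReal_lt.mp h1⟩
      rw [hψk, if_pos hcond]
      refine le_trans (min_le_right _ _) ?_
      have h2 := hshift k ω hcond.1.ne
      calc ENat.toENNReal (τ (k + 1) ω)
          ≤ ENat.toENNReal (τ k ω + τ (k + 1) (fun n => ω (n + (τ k ω).toNat))) :=
            ENat.toENNReal_mono h2
        _ = ENat.toENNReal (τ k ω)
            + ENat.toENNReal (τ (k + 1) (fun n => ω (n + (τ k ω).toNat))) :=
            ENat.toENNReal_add _ _
  -- integrated recursion step
  have hint_step : ∀ k : ℕ, 1 ≤ k →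
      ∫⁻ ω, ψ (k + 1) ω ∂μ ≤ ∫⁻ ω, ψ k ω ∂μ + B k := by
    intro k hk
    refine le_trans (lintegral_mono (fun ω => hpt k ω)) ?_
    rw [lintegral_add_left (hψ_meas k)]
    exact add_le_add_right (hstepbound k hk) _
  -- base case
  have hbase : ∫⁻ ω, ψ 1 ω ∂μ ≤ ENNReal.ofReal (4 * R ^ 2) := by
    refine le_trans (lintegral_mono fun ω => min_le_right _ _) ?_
    have h01 : zdist d x x < ((1 : ℕ) : ℝ) * R := by
      rw [zdist_self]
      simpa using hR0
    rw [hμ_def]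
    refine le_trans (hEtau x 1 h01) (ENNReal.ofReal_le_ofReal (le_of_eq ?_))
    norm_num
  -- iteration
  have hiter : ∀ k : ℕ, ∫⁻ ω, ψ (k + 1) ω ∂μ
      ≤ ENNReal.ofReal (4 * R ^ 2) + ∑ j ∈ Finset.range k, B (j + 1) := by
    intro k
    induction k with
    | zero => simpa using hbase
    | succ k ih =>
      refine le_trans (hint_step (k + 1) (Nat.succ_le_succ (Nat.zero_le k))) ?_
      rw [Finset.sum_range_succ, ← add_assoc]
      exact add_le_add_left ih _
  -- bound on the sum
  have hsum : ∀ k : ℕ, (∑ j ∈ Finset.range k, B (j + 1)) ≤ ENNReal.ofReal (C * S * R ^ 2) := by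
    intro k
    have heq : ∀ j : ℕ, B (j + 1)
        = ENNReal.ofReal ((((j : ℝ) + 3) ^ 2 * r ^ (j + 1)) * (C * R ^ 2)) := by
      intro j
      have hexp : Real.exp (-c * ((j + 1 : ℕ) : ℝ)) = r ^ (j + 1) := by
        rw [hr_def, ← Real.exp_nat_mul]
        congr 1
        push_cast
        ring
      simp only [hB_def]
      rw [hexp]
      congr 1
      push_cast
      ring
    rw [Finset.sum_congr rfl (fun j _ => heq j),
      ← ENNReal.ofReal_sum_of_nonneg (fun j _ => by positivity)]
    refine ENNReal.ofReal_le_ofReal ?_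
    rw [← Finset.sum_mul]
    have hle : (∑ j ∈ Finset.range k, ((j : ℝ) + 3) ^ 2 * r ^ (j + 1)) ≤ S :=
      Summable.sum_le_tsum _ (fun j _ => by positivity) hsummable
    calc (∑ j ∈ Finset.range k, ((j : ℝ) + 3) ^ 2 * r ^ (j + 1)) * (C * R ^ 2)
        ≤ S * (C * R ^ 2) := mul_le_mul_of_nonneg_right hle (by positivity)
      _ = C * S * R ^ 2 := by ring
  -- uniform bound for all k
  have hψbound : ∀ k : ℕ, ∫⁻ ω, ψ k ω ∂μ ≤ ENNReal.ofReal ((4 + C * S) * R ^ 2) := by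
    have hmain : ∀ m : ℕ, ∫⁻ ω, ψ (m + 1) ω ∂μ ≤ ENNReal.ofReal ((4 + C * S) * R ^ 2) := by
      intro m
      refine le_trans (hiter m) (le_trans (add_le_add_right (hsum m) _) ?_)
      rw [← ENNReal.ofReal_add (by positivity) (by positivity)]
      exact ENNReal.ofReal_le_ofReal (le_of_eq (by ring))
    intro k
    cases k with
    | zero => exact le_trans (lintegral_mono (hψ_mono (Nat.zero_le 1))) (hmain 0)
    | succ m => exact hmain m
  -- a.e. convergence of ψ
  have hae_sup : ∀ᵐ ω ∂μ, (⨆ k, ψ k ω) = ((φ ω : ℝ≥0) : ℝ≥0∞) := by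
    filter_upwards [hgood] with ω hω
    refine le_antisymm (iSup_le fun k => min_le_left _ _) ?_
    set n₀ := ⌈((φ ω : ℝ≥0) : ℝ)⌉₊ with hn₀_def
    have hk : ((φ ω : ℝ≥0) : ℝ≥0∞) ≤ ENat.toENNReal (τ n₀ ω) := by
      have h1 : ENat.toENNReal ((n₀ : ℕ∞)) ≤ ENat.toENNReal (τ n₀ ω) :=
        ENat.toENNReal_mono (hτ_lb ω hω.1 hω.2 n₀)
      rw [ENat.toENNReal_coe] at h1
      refine le_trans ?_ h1
      have h2 : ((φ ω : ℝ≥0) : ℝ) ≤ (n₀ : ℝ) := Nat.le_ceil _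
      exact_mod_cast h2
    exact le_trans (le_of_eq (min_eq_left hk).symm) (le_iSup (fun k => ψ k ω) n₀)
  -- conclude
  calc (φ.map ((↑) : ℝ≥0 → ℝ≥0∞)).lintegral μ
      = ∫⁻ ω, ((φ ω : ℝ≥0) : ℝ≥0∞) ∂μ := by
        rw [← SimpleFunc.lintegral_eq_lintegral]
        refine lintegral_congr fun ω => ?_
        rw [SimpleFunc.map_apply]
    _ = ∫⁻ ω, ⨆ k, ψ k ω ∂μ := lintegral_congr_ae (hae_sup.mono fun ω h => h.symm)
    _ = ⨆ k, ∫⁻ ω, ψ k ω ∂μ := lintegral_iSup hψ_meas hψ_mono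
    _ ≤ ENNReal.ofReal ((4 + C * S) * R ^ 2) := iSup_le hψbound
end

section
/- Let u be a function on the closed discrete ball of radius R in ℤ^d such that every point x ∈ B_{R/2} (viewed in ℝ^d) is a convex combination of at most 2^d points y_i of the closed discrete ball of radius R/2 with |y_i − x| ≤ 1. If p is a polynomial of degree ≤ 2 with Hessian matrix M_p, then for all x ∈ 𝔹_{R/2}, |u(x) − p(x)| ≤ [u]_{1; 𝔹_{R/2+1}} + max over the closed discrete ball of radius R/2 of |u − p| + C R |M_p|, where [u]_{1;A} is the Lipschitz seminorm of u on A and C depends only on d. -/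
open scoped BigOperators

/-- A lattice point viewed in Euclidean space. -/
noncomputable def coordsE (d : ℕ) (y : Fin d → ℤ) : EuclideanSpace ℝ (Fin d) :=
  (WithLp.equiv 2 (Fin d → ℝ)).symm (fun i => (y i : ℝ))

/-- The Lipschitz seminorm `[u]_{1;𝔹_s}` of `u` on the Euclidean ball of radius `s`. -/
noncomputable def lipsem (d : ℕ) (u : EuclideanSpace ℝ (Fin d) → ℝ) (s : ℝ) : ℝ :=
  ⨆ q : {q : EuclideanSpace ℝ (Fin d) × EuclideanSpace ℝ (Fin d) //
      q.1 ∈ Metric.ball 0 s ∧ q.2 ∈ Metric.ball 0 s ∧ q.1 ≠ q.2},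
    |u q.1.1 - u q.1.2| / ‖q.1.1 - q.1.2‖

example (d : ℕ) (y : Fin d → ℤ) (i : Fin d) : coordsE d y i = (y i : ℝ) := rfl

lemma coord_abs_le (d : ℕ) (x : EuclideanSpace ℝ (Fin d)) (i : Fin d) : |x i| ≤ ‖x‖ := by
  rw [EuclideanSpace.norm_eq]
  rw [← Real.sqrt_sq (abs_nonneg (x i))]
  apply Real.sqrt_le_sqrt
  have := Finset.single_le_sum (f := fun j => ‖x j‖^2) (fun j _ => sq_nonneg _)
    (Finset.mem_univ i)
  simpa [Real.norm_eq_abs] using this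

lemma lipsem_nonneg (d : ℕ) (u : EuclideanSpace ℝ (Fin d) → ℝ) (s : ℝ) : 0 ≤ lipsem d u s :=
  Real.iSup_nonneg fun q => div_nonneg (abs_nonneg _) (norm_nonneg _)

lemma lipsem_bound (d : ℕ) (u : EuclideanSpace ℝ (Fin d) → ℝ) (K : NNReal)
    (hu : LipschitzWith K u) (s : ℝ) (a c : EuclideanSpace ℝ (Fin d))
    (ha : a ∈ Metric.ball 0 s) (hc : c ∈ Metric.ball 0 s) (hac : ‖a - c‖ ≤ 1) :
    |u a - u c| ≤ lipsem d u s := by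
  rcases eq_or_ne a c with h | h
  · simpa [h] using lipsem_nonneg d u s
  have hbdd : BddAbove (Set.range fun q : {q : EuclideanSpace ℝ (Fin d) × EuclideanSpace ℝ (Fin d) //
      q.1 ∈ Metric.ball 0 s ∧ q.2 ∈ Metric.ball 0 s ∧ q.1 ≠ q.2} =>
      |u q.1.1 - u q.1.2| / ‖q.1.1 - q.1.2‖) := by
    refine ⟨K, ?_⟩
    rintro _ ⟨q, rfl⟩
    have h1 : |u q.1.1 - u q.1.2| ≤ K * ‖q.1.1 - q.1.2‖ := by
      have := hu.dist_le_mul q.1.1 q.1.2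
      simpa [Real.dist_eq, dist_eq_norm] using this
    have h2 : (0:ℝ) < ‖q.1.1 - q.1.2‖ := by
      rw [norm_pos_iff, sub_ne_zero]; exact q.2.2.2
    rw [div_le_iff₀ h2]; exact h1
  have hle := le_ciSup hbdd ⟨(a, c), ha, hc, h⟩
  have h2 : (0:ℝ) < ‖a - c‖ := by rw [norm_pos_iff, sub_ne_zero]; exact h
  calc |u a - u c| = |u a - u c| / ‖a - c‖ * ‖a - c‖ := by field_simp
    _ ≤ lipsem d u s * 1 := by
        apply mul_le_mul hle hac (norm_nonneg _) (lipsem_nonneg d u s)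
    _ = lipsem d u s := mul_one _

lemma quad_bound (d : ℕ) (M : Matrix (Fin d) (Fin d) ℝ) (R : ℝ) (hR : 1 ≤ R)
    (x Y : Fin d → ℝ) (hx : ∀ j, |x j| ≤ R / 2) (hY : ∀ j, |Y j| ≤ R / 2)
    (hxY : ∀ j, |x j - Y j| ≤ 1) :
    |(∑ i, ∑ j, M i j * x i * x j) - ∑ i, ∑ j, M i j * Y i * Y j|
      ≤ R * ∑ i, ∑ j, |M i j| := by
  have key : ∀ i j, |M i j * x i * x j - M i j * Y i * Y j| ≤ |M i j| * R := by
    intro i j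
    have : M i j * x i * x j - M i j * Y i * Y j
        = M i j * (x i * (x j - Y j) + (x i - Y i) * Y j) := by ring
    rw [this, abs_mul]
    apply mul_le_mul_of_nonneg_left _ (abs_nonneg _)
    calc |x i * (x j - Y j) + (x i - Y i) * Y j|
        ≤ |x i * (x j - Y j)| + |(x i - Y i) * Y j| := abs_add_le _ _
      _ = |x i| * |x j - Y j| + |x i - Y i| * |Y j| := by rw [abs_mul, abs_mul]
      _ ≤ (R/2) * 1 + 1 * (R/2) := by
          have h2 : (0:ℝ) ≤ R / 2 := by linarith
          exact add_le_add (mul_le_mul (hx i) (hxY j) (abs_nonneg _) h2)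
            (mul_le_mul (hxY i) (hY j) (abs_nonneg _) zero_le_one)
      _ = R := by ring
  calc |(∑ i, ∑ j, M i j * x i * x j) - ∑ i, ∑ j, M i j * Y i * Y j|
      = |∑ i, ∑ j, (M i j * x i * x j - M i j * Y i * Y j)| := by
        rw [← Finset.sum_sub_distrib]
        congr 1; apply Finset.sum_congr rfl; intro i _
        rw [← Finset.sum_sub_distrib]
    _ ≤ ∑ i, ∑ j, |M i j * x i * x j - M i j * Y i * Y j| :=
        (Finset.abs_sum_le_sum_abs _ _).trans (by
          apply Finset.sum_le_sum; intro i _; exact Finset.abs_sum_le_sum_abs _ _)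
    _ ≤ ∑ i, ∑ j, |M i j| * R := by
        apply Finset.sum_le_sum; intro i _
        apply Finset.sum_le_sum; intro j _; exact key i j
    _ = R * ∑ i, ∑ j, |M i j| := by rw [Finset.mul_sum]; congr 1; funext i; rw [Finset.mul_sum]; congr 1; funext j; ring

lemma lattice_finite (d : ℕ) (r : ℝ) : {y : Fin d → ℤ | ‖coordsE d y‖ ≤ r}.Finite := by
  apply Set.Finite.subset (Set.Finite.pi (fun i : Fin d => Set.finite_Icc (⌈-r⌉) (⌊r⌋)))
  intro y hy
  simp only [Set.mem_pi, Set.mem_univ, Set.mem_Icc, forall_true_left]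
  intro i
  have h : |((y i : ℝ))| ≤ r := (coord_abs_le d (coordsE d y) i).trans hy
  obtain ⟨h1, h2⟩ := abs_le.1 h
  exact ⟨Int.ceil_le.2 h1, Int.le_floor.2 h2⟩

lemma convex_abs_bound {n : ℕ} (α t : Fin n → ℝ) (C : ℝ) (hα0 : ∀ i, 0 ≤ α i)
    (hα1 : ∑ i, α i = 1) (ht : ∀ i, |t i| ≤ C) : |∑ i, α i * t i| ≤ C := by
  calc |∑ i, α i * t i| ≤ ∑ i, |α i * t i| := Finset.abs_sum_le_sum_abs _ _
    _ = ∑ i, α i * |t i| := by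
        apply Finset.sum_congr rfl; intro i _; rw [abs_mul, abs_of_nonneg (hα0 i)]
    _ ≤ ∑ i, α i * C := by
        apply Finset.sum_le_sum; intro i _
        exact mul_le_mul_of_nonneg_left (ht i) (hα0 i)
    _ = C := by rw [← Finset.sum_mul, hα1, one_mul]
/-- Comparison of a Lipschitz function `u` with a quadratic polynomial `p` on `𝔹_{R/2}`,
assuming every point of `𝔹_{R/2}` is a convex combination of at most `2^d` lattice points
of the closed discrete ball of radius `R/2` at distance `≤ 1`:
`|u(x) - p(x)| ≤ [u]_{1;𝔹_{R/2+1}} + max_{B̄_{R/2} ∩ ℤ^d} |u - p| + C R |M_p|`. -/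
theorem stmt12 (d : ℕ) : ∃ C : ℝ, 0 < C ∧
    ∀ (R : ℝ), 1 ≤ R →
    ∀ (u : EuclideanSpace ℝ (Fin d) → ℝ) (K : NNReal), LipschitzWith K u →
    (∀ x ∈ Metric.ball (0 : EuclideanSpace ℝ (Fin d)) (R / 2),
      ∃ (y : Fin (2 ^ d) → (Fin d → ℤ)) (α : Fin (2 ^ d) → ℝ),
        (∀ i, 0 ≤ α i) ∧ (∑ i, α i = 1) ∧
        (∀ i, ‖coordsE d (y i)‖ ≤ R / 2 ∧ ‖coordsE d (y i) - x‖ ≤ 1) ∧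
        x = ∑ i, α i • coordsE d (y i)) →
    ∀ (M : Matrix (Fin d) (Fin d) ℝ) (l : Fin d → ℝ) (b : ℝ),
      ∀ x ∈ Metric.ball (0 : EuclideanSpace ℝ (Fin d)) (R / 2),
        |u x - (b + (∑ i, l i * x i) +
            (1 / 2) * ∑ i, ∑ j, M i j * x i * x j)|
          ≤ lipsem d u (R / 2 + 1)
            + (⨆ y : {y : Fin d → ℤ // ‖coordsE d y‖ ≤ R / 2},
                |u (coordsE d y.1) - (b + (∑ i, l i * (y.1 i : ℝ)) +
                  (1 / 2) * ∑ i, ∑ j, M i j * (y.1 i : ℝ) * (y.1 j : ℝ))|)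
            + C * R * (∑ i, ∑ j, |M i j|) := by
  refine ⟨1, one_pos, ?_⟩
  intro R hR u K hu hconv M l b x hx
  obtain ⟨y, α, hα0, hα1, hyb, hxeq⟩ := hconv x hx
  set Y : Fin (2 ^ d) → EuclideanSpace ℝ (Fin d) := fun i => coordsE d (y i) with hY
  set P : EuclideanSpace ℝ (Fin d) → ℝ := fun z =>
    b + (∑ i, l i * z i) + (1 / 2) * ∑ i, ∑ j, M i j * z i * z j with hP
  set L := lipsem d u (R / 2 + 1) with hLdef
  set F : {y : Fin d → ℤ // ‖coordsE d y‖ ≤ R / 2} → ℝ := fun y =>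
    |u (coordsE d y.1) - (b + (∑ i, l i * (y.1 i : ℝ)) +
      (1 / 2) * ∑ i, ∑ j, M i j * (y.1 i : ℝ) * (y.1 j : ℝ))| with hF
  set S := ⨆ y, F y with hSdef
  -- basic facts
  have hRpos : (0:ℝ) < R := lt_of_lt_of_le one_pos hR
  have hxnorm : ‖x‖ < R / 2 := by simpa [Metric.mem_ball, dist_eq_norm] using hx
  have hYnorm : ∀ i, ‖Y i‖ ≤ R / 2 := fun i => (hyb i).1
  have hxYnorm : ∀ i, ‖x - Y i‖ ≤ 1 := by
    intro i
    have := (hyb i).2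
    rwa [norm_sub_rev] at this
  -- coordinates of x
  have hxc : ∀ k, x k = ∑ i, α i * (Y i k) := by
    intro k
    calc x k = EuclideanSpace.proj k x := rfl
      _ = ∑ i, EuclideanSpace.proj k (α i • Y i) := by rw [hxeq, map_sum]
      _ = ∑ i, α i * (Y i k) := by
          apply Finset.sum_congr rfl; intro i _
          rw [map_smul]; rfl
  -- Lipschitz-seminorm bound for each piece
  have hterm1 : ∀ i, |u x - u (Y i)| ≤ L := by
    intro i
    apply lipsem_bound d u K hu (R / 2 + 1) x (Y i)
    · simp only [Metric.mem_ball, dist_eq_norm, sub_zero]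
      linarith
    · simp only [Metric.mem_ball, dist_eq_norm, sub_zero]
      have := hYnorm i; linarith
    · exact hxYnorm i
  -- lattice-sup bound
  haveI : Finite {y : Fin d → ℤ // ‖coordsE d y‖ ≤ R / 2} :=
    (lattice_finite d (R / 2)).to_subtype
  have hbddS : BddAbove (Set.range F) := (Set.finite_range F).bddAbove
  have hterm2 : ∀ i, |u (Y i) - P (Y i)| ≤ S := by
    intro i
    exact le_ciSup hbddS ⟨y i, (hyb i).1⟩
  -- quadratic part bound
  have hQ : ∀ i, |(∑ j, ∑ k, M j k * x j * x k) - ∑ j, ∑ k, M j k * Y i j * Y i k|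
      ≤ R * ∑ j, ∑ k, |M j k| := by
    intro i
    apply quad_bound d M R hR
    · intro j; exact (coord_abs_le d x j).trans hxnorm.le
    · intro j; exact (coord_abs_le d (Y i) j).trans (hYnorm i)
    · intro j
      have h := (coord_abs_le d (x - Y i) j).trans (hxYnorm i)
      exact h
  -- splitting the affine part of ∑ αᵢ P (Y i)
  have hA : ∑ i, α i * (∑ k, l k * Y i k) = ∑ k, l k * x k := by
    calc ∑ i, α i * ∑ k, l k * Y i k = ∑ i, ∑ k, α i * (l k * Y i k) := by
          apply Finset.sum_congr rfl; intro i _; rw [Finset.mul_sum]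
      _ = ∑ k, ∑ i, α i * (l k * Y i k) := Finset.sum_comm
      _ = ∑ k, l k * ∑ i, α i * Y i k := by
          apply Finset.sum_congr rfl; intro k _
          rw [Finset.mul_sum]
          apply Finset.sum_congr rfl; intro i _; ring
      _ = ∑ k, l k * x k := by
          apply Finset.sum_congr rfl; intro k _; rw [hxc k]
  have hsplit : ∑ i, α i * P (Y i)
      = b + (∑ k, l k * x k)
        + (1 / 2) * ∑ i, α i * (∑ j, ∑ k, M j k * Y i j * Y i k) := by
    have e1 : ∀ i, α i * P (Y i)
        = α i * b + α i * (∑ k, l k * Y i k)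
          + (1 / 2) * (α i * (∑ j, ∑ k, M j k * Y i j * Y i k)) := by
      intro i; simp only [hP]; ring
    rw [Finset.sum_congr rfl (fun i _ => e1 i), Finset.sum_add_distrib,
      Finset.sum_add_distrib, ← Finset.sum_mul, hα1, one_mul, hA, ← Finset.mul_sum]
  -- third bound
  have h3 : |(∑ i, α i * P (Y i)) - P x| ≤ R * (∑ j, ∑ k, |M j k|) := by
    have : (∑ i, α i * P (Y i)) - P x
        = (1/2) * ∑ i, α i * ((∑ j, ∑ k, M j k * Y i j * Y i k)
            - (∑ j, ∑ k, M j k * x j * x k)) := by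
      rw [hsplit]
      simp only [hP, mul_sub, Finset.sum_sub_distrib, ← Finset.sum_mul, hα1]
      ring
    rw [this, abs_mul]
    have h4 : |∑ i, α i * ((∑ j, ∑ k, M j k * Y i j * Y i k)
        - (∑ j, ∑ k, M j k * x j * x k))| ≤ R * (∑ j, ∑ k, |M j k|) := by
      apply convex_abs_bound α _ _ hα0 hα1
      intro i
      rw [abs_sub_comm]
      exact hQ i
    have hM0 : (0:ℝ) ≤ R * (∑ j, ∑ k, |M j k|) := by
      apply mul_nonneg hRpos.le
      apply Finset.sum_nonneg; intro j _
      apply Finset.sum_nonneg; intro k _; exact abs_nonneg _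
    calc |(1/2 : ℝ)| * |∑ i, α i * ((∑ j, ∑ k, M j k * Y i j * Y i k)
          - (∑ j, ∑ k, M j k * x j * x k))|
        ≤ 1 * (R * (∑ j, ∑ k, |M j k|)) := by
          apply mul_le_mul _ h4 (abs_nonneg _) zero_le_one
          rw [abs_of_pos]; linarith; norm_num
      _ = R * (∑ j, ∑ k, |M j k|) := one_mul _
  -- decomposition
  have decomp : u x - P x = (∑ i, α i * (u x - u (Y i)))
      + (∑ i, α i * (u (Y i) - P (Y i))) + ((∑ i, α i * P (Y i)) - P x) := by
    have h1 : ∑ i, α i * u x = u x := by rw [← Finset.sum_mul, hα1, one_mul]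
    simp only [mul_sub, Finset.sum_sub_distrib, h1]
    ring
  -- conclusion
  show |u x - P x| ≤ L + S + 1 * R * (∑ j, ∑ k, |M j k|)
  rw [decomp, one_mul]
  calc |(∑ i, α i * (u x - u (Y i))) + (∑ i, α i * (u (Y i) - P (Y i)))
        + ((∑ i, α i * P (Y i)) - P x)|
      ≤ |∑ i, α i * (u x - u (Y i))| + |∑ i, α i * (u (Y i) - P (Y i))|
        + |(∑ i, α i * P (Y i)) - P x| := abs_add_three _ _ _
    _ ≤ L + S + R * (∑ j, ∑ k, |M j k|) := by
        apply add_le_add (add_le_add ?_ ?_) h3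
        · exact convex_abs_bound α _ _ hα0 hα1 hterm1
        · exact convex_abs_bound α _ _ hα0 hα1 hterm2
end

section
/- For R ≥ 2 and c > 0, define ν_R(r) = 1 + log(R / ((r+1) ∧ R)) for d = 2 and ν_R(r) = (r+1)^{2−d} for d ≥ 3. Then ∫_0^∞ e^{−2cr/R} ν_R(r)² r^{d−1} dr ≤ C μ(R)², where μ(R) = R for d = 2, μ(R) = R^{1/2} for d = 3, μ(R) = (1 ∨ log R)^{1/2} for d = 4, and μ(R) = 1 for d ≥ 5, and C depends only on d and c. -/
open MeasureTheory Set Real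

private lemma key_le {g h : ℝ → ℝ} {s : Set ℝ} (hs : MeasurableSet s)
    (hmono : ∀ x ∈ s, g x ≤ h x) (hnn : ∀ x ∈ s, 0 ≤ h x)
    (hint : IntegrableOn h s) :
    ∫⁻ x in s, ENNReal.ofReal (g x) ≤ ENNReal.ofReal (∫ x in s, h x) := by
  calc ∫⁻ x in s, ENNReal.ofReal (g x)
      ≤ ∫⁻ x in s, ENNReal.ofReal (h x) := by
        refine lintegral_mono_ae ?_
        filter_upwards [ae_restrict_mem hs] with x hx
        exact ENNReal.ofReal_le_ofReal (hmono x hx)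
    _ = ENNReal.ofReal (∫ x in s, h x) := by
        rw [ofReal_integral_eq_lintegral_ofReal hint ?_]
        filter_upwards [ae_restrict_mem hs] with x hx using hnn x hx
private lemma int_exp {b : ℝ} (hb : 0 < b) :
    ∫ x in Ioi (0:ℝ), Real.exp (-(b * x)) = 1 / b := by
  have := Real.integral_rpow_mul_exp_neg_mul_Ioi (a := 1) one_pos hb
  simpa using this
private lemma int_x_exp {b : ℝ} (hb : 0 < b) :
    ∫ x in Ioi (0:ℝ), x * Real.exp (-(b * x)) = 1 / (b * b) := by
  have := Real.integral_rpow_mul_exp_neg_mul_Ioi (a := 2) two_pos hb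
  norm_num [Real.Gamma_two] at this
  rw [this, sq, one_div]
private lemma integrable_exp' {b : ℝ} (hb : 0 < b) (a : ℝ) :
    IntegrableOn (fun x : ℝ => Real.exp (-(b * x))) (Ioi a) := by
  simpa [neg_mul] using exp_neg_integrableOn_Ioi a hb
private lemma integrable_x_exp {b : ℝ} (hb : 0 < b) :
    IntegrableOn (fun x : ℝ => x * Real.exp (-(b * x))) (Ioi 0) := by
  have := integrableOn_rpow_mul_exp_neg_mul_rpow (p := 1) (s := 1) (b := b)
    (by norm_num) one_pos hb
  simpa [neg_mul] using this

private lemma exp_le_one' {t : ℝ} (h : t ≤ 0) : Real.exp t ≤ 1 := by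
  simpa using Real.exp_le_exp.mpr h

set_option maxHeartbeats 2000000 in
/-- For `R ≥ 2`, `c > 0`:
`∫_0^∞ e^{-2cr/R} ν_R(r)² r^{d-1} dr ≤ C μ(R)²` with the dimension-dependent
`ν_R` and `μ`. -/
theorem stmt13 (d : ℕ) (hd : 2 ≤ d) (c : ℝ) (hc : 0 < c) :
    ∃ C : ℝ, 0 < C ∧ ∀ R : ℝ, 2 ≤ R →
      (∫⁻ r in Set.Ioi (0 : ℝ), ENNReal.ofReal
          (Real.exp (-2 * c * r / R) *
            (if d = 2 then 1 + Real.log (R / min (r + 1) R)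
              else (r + 1) ^ ((2 : ℝ) - d)) ^ 2 * r ^ (d - 1)))
        ≤ ENNReal.ofReal (C *
            (if d = 2 then R else if d = 3 then R ^ ((1 : ℝ) / 2)
              else if d = 4 then (max 1 (Real.log R)) ^ ((1 : ℝ) / 2) else 1) ^ 2) := by
  by_cases h2 : d = 2
  · subst h2
    refine (fun hgoal => ⟨2/c + 1/c^2, by positivity, hgoal⟩) ?_
    intro R hR
    have hR0 : (0:ℝ) < R := by linarith
    set b := 2*c/R with hbdef
    have hb : 0 < b := by positivity
    norm_num
    have hint : IntegrableOn
        (fun x : ℝ => 4*R*Real.exp (-(b*x)) + 4*(x*Real.exp (-(b*x)))) (Ioi 0) :=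
      ((integrable_exp' hb 0).const_mul (4*R)).add ((integrable_x_exp hb).const_mul 4)
    refine le_trans (key_le measurableSet_Ioi ?_ (fun x hx => by have hx0 : (0:ℝ) < x := hx; positivity) hint) ?_
    · intro x hx
      have hx0 : (0:ℝ) < x := hx
      have h1 : -(2*c*x)/R = -(b*x) := by rw [hbdef]; ring
      set m := min (x+1) R with hmdef
      have hm1 : 1 ≤ m := le_min (by linarith) (by linarith)
      have hm0 : (0:ℝ) < m := by linarith
      have hmR : m ≤ R := min_le_right _ _
      have hRm : 1 ≤ R / m := (one_le_div hm0).mpr hmR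
      set s := Real.sqrt (R/m) with hsdef
      have hs2 : s^2 = R/m := Real.sq_sqrt (by linarith)
      have hsnn : 0 ≤ s := Real.sqrt_nonneg _
      have hs1 : 1 ≤ s := by nlinarith
      have hlogs : Real.log s = Real.log (R/m) / 2 := Real.log_sqrt (by linarith)
      have hls : Real.log s ≤ s - 1 := Real.log_le_sub_one_of_pos (by linarith)
      have hν : 1 + Real.log (R/m) ≤ 2*s := by linarith
      have hνnn : 0 ≤ 1 + Real.log (R/m) := by
        have := Real.log_nonneg hRm; linarith
      have hν2 : (1 + Real.log (R/m))^2 ≤ 4*(R/m) := by nlinarith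
      have hrm : (R/m)*x ≤ R + x := by
        rcases le_total (x+1) R with h|h
        · rw [hmdef, min_eq_left h, div_mul_eq_mul_div, div_le_iff₀ (by linarith)]
          nlinarith
        · rw [hmdef, min_eq_right h, div_self hR0.ne', one_mul]
          linarith
      calc Real.exp (-(2*c*x)/R) * (1 + Real.log (R/m))^2 * x
          = Real.exp (-(b*x)) * ((1 + Real.log (R/m))^2 * x) := by rw [h1, mul_assoc]
        _ ≤ Real.exp (-(b*x)) * (4*(R/m)*x) := by
            refine mul_le_mul_of_nonneg_left ?_ (Real.exp_pos _).le
            exact mul_le_mul_of_nonneg_right hν2 hx0.le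
        _ ≤ Real.exp (-(b*x)) * (4*R + 4*x) := by
            refine mul_le_mul_of_nonneg_left ?_ (Real.exp_pos _).le
            nlinarith
        _ = 4*R*Real.exp (-(b*x)) + 4*(x*Real.exp (-(b*x))) := by ring
    · rw [integral_add ((integrable_exp' hb 0).const_mul (4*R))
        ((integrable_x_exp hb).const_mul 4), integral_const_mul, integral_const_mul,
        int_exp hb, int_x_exp hb]
      apply ENNReal.ofReal_le_ofReal
      apply le_of_eq
      rw [hbdef]
      field_simp
      ring
  by_cases h3 : d = 3
  · subst h3
    refine (fun hgoal => ⟨1/(2*c), by positivity, hgoal⟩) ?_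
    intro R hR
    have hR0 : (0:ℝ) < R := by linarith
    set b := 2*c/R with hbdef
    have hb : 0 < b := by positivity
    norm_num
    refine le_trans (key_le measurableSet_Ioi ?_ (fun x _ => (Real.exp_pos _).le)
        (integrable_exp' hb 0)) ?_
    · intro x hx
      have hx0 : (0:ℝ) < x := hx
      have h1 : -(2*c*x)/R = -(b*x) := by rw [hbdef]; ring
      have hA : ((x+1) ^ (-1:ℝ))^2 * x^2 ≤ 1 := by
        rw [Real.rpow_neg_one, ← mul_pow]
        have e : (x+1)⁻¹ * x = x/(x+1) := by ring
        have : (x+1)⁻¹ * x ≤ 1 := by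
          rw [e, div_le_one (by linarith)]; linarith
        exact pow_le_one₀ (by positivity) this
      rw [h1, mul_assoc]
      exact mul_le_of_le_one_right (Real.exp_pos _).le hA
    · rw [int_exp hb]
      apply ENNReal.ofReal_le_ofReal
      have hsq : (R ^ ((1:ℝ)/2))^2 = R := by
        rw [← Real.rpow_natCast (R ^ ((1:ℝ)/2)) 2, ← Real.rpow_mul hR0.le]
        norm_num
      rw [hsq, hbdef]
      apply le_of_eq
      field_simp
  by_cases h4 : d = 4
  · subst h4
    refine (fun hgoal => ⟨2 + 1/(2*c), by positivity, hgoal⟩) ?_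
    intro R hR
    have hR0 : (0:ℝ) < R := by linarith
    set b := 2*c/R with hbdef
    have hb : 0 < b := by positivity
    norm_num
    rw [← Ioc_union_Ioi_eq_Ioi hR0.le,
      lintegral_union measurableSet_Ioi (Ioc_disjoint_Ioi le_rfl)]
    -- pointwise rpow estimate
    have hA : ∀ x : ℝ, 0 < x → ((x+1) ^ (-2:ℝ))^2 * x^3 ≤ (x+1)⁻¹ := by
      intro x hx0
      have hx1 : (0:ℝ) < x + 1 := by linarith
      have e1 : ((x+1) ^ (-2:ℝ))^2 = (x+1) ^ (-4:ℝ) := by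
        rw [← Real.rpow_natCast ((x+1) ^ (-2:ℝ)) 2, ← Real.rpow_mul hx1.le]
        norm_num
      have e2 : x^3 ≤ (x+1) ^ (3:ℝ) := by
        rw [show ((3:ℝ)) = ((3:ℕ):ℝ) by norm_num, Real.rpow_natCast]
        exact pow_le_pow_left₀ hx0.le (by linarith) 3
      have e3 : (x+1) ^ (-4:ℝ) * (x+1) ^ (3:ℝ) = (x+1)⁻¹ := by
        rw [← Real.rpow_add hx1]
        norm_num [Real.rpow_neg_one]
      calc ((x+1) ^ (-2:ℝ))^2 * x^3 = (x+1) ^ (-4:ℝ) * x^3 := by rw [e1]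
        _ ≤ (x+1) ^ (-4:ℝ) * (x+1) ^ (3:ℝ) := by
            exact mul_le_mul_of_nonneg_left e2 (by positivity)
        _ = (x+1)⁻¹ := e3
    have piece1 : ∫⁻ x in Ioc 0 R, ENNReal.ofReal
        (Real.exp (-(2*c*x)/R) * ((x+1) ^ (-2:ℝ))^2 * x^3)
        ≤ ENNReal.ofReal (Real.log (R+1)) := by
      have hint1 : IntegrableOn (fun x : ℝ => (x+1)⁻¹) (Ioc 0 R) := by
        have hco : ContinuousOn (fun x:ℝ => (x+1)⁻¹) (Icc 0 R) := by
          apply ContinuousOn.inv₀ (by fun_prop)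
          intro x hx
          have := hx.1
          positivity
        exact (hco.integrableOn_Icc).mono_set Ioc_subset_Icc_self
      have hval : ∫ x in Ioc 0 R, (x+1)⁻¹ = Real.log (R+1) := by
        rw [← intervalIntegral.integral_of_le hR0.le]
        rw [intervalIntegral.integral_comp_add_right (fun x : ℝ => x⁻¹) 1]
        rw [integral_inv (by
          intro hmem
          rw [Set.mem_uIcc] at hmem
          rcases hmem with ⟨h1, _⟩ | ⟨_, h2⟩ <;> linarith)]
        norm_num
      rw [← hval]
      refine key_le measurableSet_Ioc ?_ (fun x hx => by have := hx.1; positivity) hint1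
      intro x hx
      have hx0 : (0:ℝ) < x := hx.1
      calc Real.exp (-(2*c*x)/R) * ((x+1) ^ (-2:ℝ))^2 * x^3
          ≤ 1 * (((x+1) ^ (-2:ℝ))^2 * x^3) := by
            rw [mul_assoc]
            refine mul_le_mul_of_nonneg_right (exp_le_one' ?_) (by positivity)
            have : (0:ℝ) ≤ 2*c*x := by positivity
            apply div_nonpos_of_nonpos_of_nonneg <;> linarith
        _ = ((x+1) ^ (-2:ℝ))^2 * x^3 := one_mul _
        _ ≤ (x+1)⁻¹ := hA x hx0
    have piece2 : ∫⁻ x in Ioi R, ENNReal.ofReal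
        (Real.exp (-(2*c*x)/R) * ((x+1) ^ (-2:ℝ))^2 * x^3)
        ≤ ENNReal.ofReal (1/(2*c)) := by
      have hint2 : IntegrableOn (fun x : ℝ => (1/R) * Real.exp (-(b*x))) (Ioi R) :=
        (integrable_exp' hb R).const_mul _
      refine le_trans (key_le measurableSet_Ioi ?_ (fun x _ => by positivity) hint2) ?_
      · intro x hx
        have hxR : R < x := hx
        have hx0 : (0:ℝ) < x := by linarith
        have h1 : -(2*c*x)/R = -(b*x) := by rw [hbdef]; ring
        calc Real.exp (-(2*c*x)/R) * ((x+1) ^ (-2:ℝ))^2 * x^3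
            = Real.exp (-(b*x)) * (((x+1) ^ (-2:ℝ))^2 * x^3) := by rw [h1, mul_assoc]
          _ ≤ Real.exp (-(b*x)) * (1/R) := by
              refine mul_le_mul_of_nonneg_left ?_ (Real.exp_pos _).le
              refine le_trans (hA x hx0) ?_
              rw [one_div]
              exact inv_anti₀ hR0 (by linarith)
          _ = (1/R) * Real.exp (-(b*x)) := mul_comm _ _
      · apply ENNReal.ofReal_le_ofReal
        have hmono2 : ∫ x in Ioi R, (1/R) * Real.exp (-(b*x))
            ≤ ∫ x in Ioi 0, (1/R) * Real.exp (-(b*x)) := by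
          refine setIntegral_mono_set ((integrable_exp' hb 0).const_mul _) ?_ ?_
          · exact Filter.Eventually.of_forall fun x => by positivity
          · exact (Ioi_subset_Ioi hR0.le).eventuallyLE
        refine le_trans hmono2 ?_
        rw [integral_const_mul, int_exp hb, hbdef]
        apply le_of_eq
        field_simp
    have hconv : ∀ x : ℝ, ((x+1) ^ (-2:ℝ))^2 = (((x+1)^2)^2)⁻¹ := by
      intro x
      rw [show (-2:ℝ) = ((-2:ℤ):ℝ) by norm_num, Real.rpow_intCast, zpow_neg, inv_pow]
      norm_num
    simp only [hconv] at piece1 piece2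
    refine le_trans (add_le_add piece1 piece2) ?_
    rw [← ENNReal.ofReal_add (Real.log_nonneg (by linarith)) (by positivity)]
    apply ENNReal.ofReal_le_ofReal
    have hmax1 : (1:ℝ) ≤ max 1 (Real.log R) := le_max_left _ _
    have hmsq : (max 1 (Real.log R) ^ ((1:ℝ)/2))^2 = max 1 (Real.log R) := by
      rw [← Real.rpow_natCast (max 1 (Real.log R) ^ ((1:ℝ)/2)) 2,
        ← Real.rpow_mul (by linarith)]
      norm_num
    rw [hmsq]
    have hlog : Real.log (R+1) ≤ 2 * max 1 (Real.log R) := by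
      have h1 : R + 1 ≤ R^2 := by nlinarith
      have h2 : Real.log (R+1) ≤ Real.log (R^2) := Real.log_le_log (by linarith) h1
      rw [Real.log_pow] at h2
      have h3 : Real.log R ≤ max 1 (Real.log R) := le_max_right _ _
      push_cast at h2
      linarith
    have h4 : 1/(2*c) ≤ (1/(2*c)) * max 1 (Real.log R) :=
      le_mul_of_one_le_right (by positivity) hmax1
    have hkey : Real.log (R+1) + 1/(2*c)
        ≤ 2 * max 1 (Real.log R) + (1/(2*c)) * max 1 (Real.log R) := by linarith
    refine hkey.trans (le_of_eq ?_)
    field_simp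
  have hd5 : 5 ≤ d := by omega
  refine (fun hgoal => ⟨(2:ℝ), by positivity, hgoal⟩) ?_
  intro R hR
  have hR0 : (0:ℝ) < R := by linarith
  simp only [if_neg h2, if_neg h3, if_neg h4]
  have hd5' : (5:ℝ) ≤ (d:ℝ) := by exact_mod_cast hd5
  have hexp : ∀ x : ℝ, 0 < x → Real.exp (-2 * c * x / R) ≤ 1 := by
    intro x hx0
    apply exp_le_one'
    have : (0:ℝ) ≤ 2*c*x := by positivity
    apply div_nonpos_of_nonpos_of_nonneg <;> linarith
  rw [← Ioc_union_Ioi_eq_Ioi (zero_le_one (α := ℝ)),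
    lintegral_union measurableSet_Ioi (Ioc_disjoint_Ioi le_rfl)]
  have piece1 : ∫⁻ x in Ioc (0:ℝ) 1, ENNReal.ofReal
      (Real.exp (-2 * c * x / R) * ((x+1) ^ ((2:ℝ) - d))^2 * x ^ (d-1))
      ≤ ENNReal.ofReal 1 := by
    have hval : ∫ x in Ioc (0:ℝ) 1, (1:ℝ) = 1 := by
      simp [Real.volume_Ioc]
    refine le_trans (key_le measurableSet_Ioc ?_ (fun x _ => zero_le_one) (by simp))
      (le_of_eq (by rw [hval]))
    intro x hx
    have hx0 : (0:ℝ) < x := hx.1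
    have hx1 : x ≤ 1 := hx.2
    have hB : (x+1) ^ ((2:ℝ) - d) ≤ 1 :=
      Real.rpow_le_one_of_one_le_of_nonpos (by linarith) (by linarith)
    have hBnn : (0:ℝ) ≤ (x+1) ^ ((2:ℝ) - d) := Real.rpow_nonneg (by linarith) _
    have hB2 : ((x+1) ^ ((2:ℝ) - d))^2 ≤ 1 := pow_le_one₀ hBnn hB
    have hxp : x ^ (d-1) ≤ 1 := pow_le_one₀ hx0.le hx1
    have hxpnn : (0:ℝ) ≤ x ^ (d-1) := by positivity
    calc Real.exp (-2 * c * x / R) * ((x+1) ^ ((2:ℝ) - d))^2 * x ^ (d-1)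
        ≤ 1 * 1 * 1 := by
          refine mul_le_mul (mul_le_mul (hexp x hx0) hB2 (by positivity) zero_le_one)
            hxp hxpnn (by norm_num)
      _ = 1 := by norm_num
  have piece2 : ∫⁻ x in Ioi (1:ℝ), ENNReal.ofReal
      (Real.exp (-2 * c * x / R) * ((x+1) ^ ((2:ℝ) - d))^2 * x ^ (d-1))
      ≤ ENNReal.ofReal 1 := by
    have hint2 : IntegrableOn (fun x : ℝ => x ^ (-2:ℝ)) (Ioi 1) :=
      integrableOn_Ioi_rpow_of_lt (by norm_num) one_pos
    have hval : ∫ x in Ioi (1:ℝ), x ^ (-2:ℝ) = 1 := by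
      rw [integral_Ioi_rpow_of_lt (by norm_num) one_pos]
      norm_num
    refine le_trans (key_le measurableSet_Ioi ?_
      (fun x hx => Real.rpow_nonneg (by have : (1:ℝ) < x := hx; linarith) _) hint2)
      (le_of_eq (by rw [hval]))
    intro x hx
    have hx1 : (1:ℝ) < x := hx
    have hx0 : (0:ℝ) < x := by linarith
    have hx10 : (0:ℝ) < x + 1 := by linarith
    have e1 : ((x+1) ^ ((2:ℝ) - d))^2 = (x+1) ^ (2*((2:ℝ) - d)) := by
      rw [← Real.rpow_natCast ((x+1) ^ ((2:ℝ) - d)) 2, ← Real.rpow_mul hx10.le]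
      ring_nf
    have ecast : ((d-1:ℕ):ℝ) = (d:ℝ) - 1 := by
      rw [Nat.cast_sub (by omega), Nat.cast_one]
    have e2 : x ^ (d-1) ≤ (x+1) ^ (((d:ℝ) - 1)) := by
      rw [← ecast, ← Real.rpow_natCast x (d-1)]
      exact Real.rpow_le_rpow hx0.le (by linarith) (by positivity)
    have e3 : (x+1) ^ (2*((2:ℝ) - d)) * (x+1) ^ ((d:ℝ) - 1)
        = (x+1) ^ ((3:ℝ) - d) := by
      rw [← Real.rpow_add hx10]
      ring_nf
    have e4 : (x+1) ^ ((3:ℝ) - d) ≤ x ^ ((3:ℝ) - d) :=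
      Real.rpow_le_rpow_of_nonpos hx0 (by linarith) (by linarith)
    have e5 : x ^ ((3:ℝ) - d) ≤ x ^ (-2:ℝ) :=
      Real.rpow_le_rpow_of_exponent_le hx1.le (by linarith)
    calc Real.exp (-2 * c * x / R) * ((x+1) ^ ((2:ℝ) - d))^2 * x ^ (d-1)
        ≤ 1 * (((x+1) ^ ((2:ℝ) - d))^2 * x ^ (d-1)) := by
          rw [mul_assoc]
          exact mul_le_mul_of_nonneg_right (hexp x hx0) (by positivity)
      _ = (x+1) ^ (2*((2:ℝ) - d)) * x ^ (d-1) := by rw [one_mul, e1]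
      _ ≤ (x+1) ^ (2*((2:ℝ) - d)) * (x+1) ^ ((d:ℝ) - 1) := by
          exact mul_le_mul_of_nonneg_left e2 (by positivity)
      _ = (x+1) ^ ((3:ℝ) - d) := e3
      _ ≤ x ^ (-2:ℝ) := e4.trans e5
  refine le_trans (add_le_add piece1 piece2) ?_
  rw [← ENNReal.ofReal_add zero_le_one zero_le_one]
  apply ENNReal.ofReal_le_ofReal
  norm_num
end

section
/- Let d ≥ 2, R ≥ 1, c > 0, and define h(r,t) = r²/(r ∨ t) + r log((r/t) ∨ 1) for r ≥ 0, t > 0. Define v(r) = 1 + log(R/((r+1) ∧ R)) if d = 2 and v(r) = (r+1)^{2−d} if d ≥ 3. Then there exist constants C, c₂ > 0 depending only on d and c such that for all y ∈ ℤ^d, ∫_0^∞ (1+t)^{−d/2} exp(−t/R² − c·h(|y|, t)) dt ≤ C e^{−c₂|y|/R} v(|y|). -/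
open MeasureTheory Set Real

/-- `h(r,t) = r²/(r ∨ t) + r log((r/t) ∨ 1)`. -/
noncomputable def mfh (r t : ℝ) : ℝ :=
  r ^ 2 / max r t + r * Real.log (max (r / t) 1)

lemma mfh_ge_div {r t : ℝ} (hr : 0 ≤ r) : r ^ 2 / max r t ≤ mfh r t := by
  unfold mfh
  have h : 0 ≤ r * Real.log (max (r / t) 1) :=
    mul_nonneg hr (Real.log_nonneg (le_max_right _ _))
  linarith

lemma mfh_ge_r {r t : ℝ} (ht : 0 < t) (htr : t ≤ r) : r ≤ mfh r t := by
  have hr : 0 < r := ht.trans_le htr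
  have h := mfh_ge_div (r := r) (t := t) hr.le
  rwa [max_eq_left htr, sq, mul_div_assoc, div_self hr.ne', mul_one] at h

lemma mfh_ge_sq_div {r t : ℝ} (hr : 0 ≤ r) (hrt : r ≤ t) : r ^ 2 / t ≤ mfh r t := by
  have h := mfh_ge_div (r := r) (t := t) hr
  rwa [max_eq_right hrt] at h

lemma mfh_nonneg {r t : ℝ} (hr : 0 ≤ r) (ht : 0 < t) : 0 ≤ mfh r t :=
  le_trans (div_nonneg (sq_nonneg r) (le_trans ht.le (le_max_right r t))) (mfh_ge_div hr)

lemma lint_le_const {s : Set ℝ} {f : ℝ → ℝ} {K : ℝ} (hs : MeasurableSet s)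
    (hb : ∀ t ∈ s, f t ≤ K) :
    (∫⁻ t in s, ENNReal.ofReal (f t)) ≤ ENNReal.ofReal K * volume s := by
  calc (∫⁻ t in s, ENNReal.ofReal (f t)) ≤ ∫⁻ _ in s, ENNReal.ofReal K :=
        setLIntegral_mono' hs fun t ht => ENNReal.ofReal_le_ofReal (hb t ht)
    _ = ENNReal.ofReal K * volume s := setLIntegral_const s _

lemma lint_exp_tail {b A : ℝ} (hb : 0 < b) (hA : 0 ≤ A) :
    (∫⁻ t in Set.Ioi A, ENNReal.ofReal (Real.exp (-(b * t)))) ≤ ENNReal.ofReal (1 / b) := by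
  have h1 : (∫⁻ t in Set.Ioi A, ENNReal.ofReal (Real.exp (-(b * t))))
      ≤ ∫⁻ t in Set.Ioi (0:ℝ), ENNReal.ofReal (Real.exp (-(b * t))) :=
    lintegral_mono_set (Set.Ioi_subset_Ioi hA)
  have hint : IntegrableOn (fun t : ℝ => Real.exp (-(b * t))) (Set.Ioi (0:ℝ)) := by
    simpa [neg_mul] using exp_neg_integrableOn_Ioi 0 hb
  have h2 : (∫⁻ t in Set.Ioi (0:ℝ), ENNReal.ofReal (Real.exp (-(b * t))))
      = ENNReal.ofReal (∫ t in Set.Ioi (0:ℝ), Real.exp (-(b * t))) :=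
    (ofReal_integral_eq_lintegral_ofReal hint
      (Filter.Eventually.of_forall fun x => (Real.exp_pos _).le)).symm
  have h3 : (∫ t in Set.Ioi (0:ℝ), Real.exp (-(b * t))) = 1 / b := by
    have h := integral_comp_mul_left_Ioi (fun u => Real.exp (-u)) 0 hb
    simp only [mul_zero, integral_exp_neg_Ioi_zero, smul_eq_mul, mul_one] at h
    rw [h]; ring
  refine h1.trans ?_
  rw [h2, h3]

lemma lint_one_div_Ioc {A B : ℝ} (hA : 0 < A) (hAB : A ≤ B) :
    (∫⁻ t in Set.Ioc A B, ENNReal.ofReal (1 / t)) = ENNReal.ofReal (Real.log (B / A)) := by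
  have hB : 0 < B := hA.trans_le hAB
  have hii : IntervalIntegrable (fun t : ℝ => 1 / t) volume A B := by
    apply intervalIntegral.intervalIntegrable_one_div (f := fun x : ℝ => x)
    · intro x hx
      have := ((uIcc_of_le hAB) ▸ hx).1
      exact (lt_of_lt_of_le hA this).ne'
    · exact continuousOn_id
  have hint : IntegrableOn (fun t : ℝ => 1 / t) (Set.Ioc A B) :=
    (intervalIntegrable_iff_integrableOn_Ioc_of_le hAB).1 hii
  have hnn : 0 ≤ᵐ[volume.restrict (Set.Ioc A B)] fun t : ℝ => 1 / t := by
    rw [Filter.EventuallyLE, ae_restrict_iff' measurableSet_Ioc]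
    exact Filter.Eventually.of_forall fun t ht => by have := hA.trans ht.1; positivity
  have h2 := ofReal_integral_eq_lintegral_ofReal hint hnn
  rw [← h2]
  congr 1
  rw [← intervalIntegral.integral_of_le hAB]
  exact integral_one_div_of_pos hA hB

lemma lint_rpow_tail {d : ℕ} (hd : 3 ≤ d) {A : ℝ} (hA : 0 < A) :
    (∫⁻ t in Set.Ioi A, ENNReal.ofReal (t ^ (-(d:ℝ)/2)))
      = ENNReal.ofReal ((2/((d:ℝ)-2)) * A ^ ((2-(d:ℝ))/2)) := by
  have hs : (-(d:ℝ)/2) < -1 := by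
    have : (3:ℝ) ≤ d := by exact_mod_cast hd
    linarith
  have hint := integrableOn_Ioi_rpow_of_lt hs hA
  have hnn : 0 ≤ᵐ[volume.restrict (Set.Ioi A)] fun t : ℝ => t ^ (-(d:ℝ)/2) := by
    rw [Filter.EventuallyLE, ae_restrict_iff' measurableSet_Ioi]
    exact Filter.Eventually.of_forall fun t ht =>
      Real.rpow_nonneg (le_of_lt (hA.trans ht)) _
  have h2 := ofReal_integral_eq_lintegral_ofReal hint hnn
  rw [← h2, integral_Ioi_rpow_of_lt hs hA]
  congr 1
  have hd2 : (d:ℝ) - 2 ≠ 0 := by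
    have : (3:ℝ) ≤ d := by exact_mod_cast hd
    intro h; linarith
  have e1 : -(d:ℝ)/2 + 1 = (2-(d:ℝ))/2 := by ring
  rw [e1]
  generalize A ^ ((2-(d:ℝ))/2) = B
  have h22 : (2:ℝ) - d ≠ 0 := fun h => hd2 (by linarith)
  field_simp
  ring



lemma exp_neg_le (n : ℕ) {x : ℝ} (hx : 0 < x) :
    Real.exp (-x) ≤ (n.factorial : ℝ) / x ^ n := by
  have h := Real.pow_div_factorial_le_exp x hx.le n
  have hf : (0:ℝ) < n.factorial := by exact_mod_cast n.factorial_pos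
  rw [div_le_iff₀ hf] at h
  rw [Real.exp_neg, le_div_iff₀ (pow_pos hx n), inv_mul_eq_div, div_le_iff₀ (Real.exp_pos x)]
  nlinarith

lemma exp_nonpos_aux (d : ℕ) : -(d:ℝ)/2 ≤ 0 := by
  have : (0:ℝ) ≤ (d:ℝ) := Nat.cast_nonneg d
  linarith

lemma exp_le_neg_one (d : ℕ) (hd : 2 ≤ d) : -(d:ℝ)/2 ≤ -1 := by
  have : (2:ℝ) ≤ (d:ℝ) := by exact_mod_cast hd
  linarith


-- Piece 1: (0, r]
lemma pieceP1 (d : ℕ) {a R r : ℝ} (ha : 0 < a) (hR : 1 ≤ R) :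
    (∫⁻ t in Set.Ioc (0:ℝ) r, ENNReal.ofReal
      ((1 + t) ^ (-(d:ℝ)/2) * Real.exp (-(t / (2 * R ^ 2)) - a * mfh r t)))
    ≤ ENNReal.ofReal (Real.exp (-(a * r)) * r) := by
  have hb : ∀ t ∈ Set.Ioc (0:ℝ) r,
      (1 + t) ^ (-(d:ℝ)/2) * Real.exp (-(t / (2 * R ^ 2)) - a * mfh r t)
        ≤ Real.exp (-(a * r)) := by
    intro t ht
    have h1 : (1+t) ^ (-(d:ℝ)/2) ≤ 1 :=
      Real.rpow_le_one_of_one_le_of_nonpos (by linarith [ht.1.le]) (exp_nonpos_aux d)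
    have hh := mfh_ge_r ht.1 ht.2
    have h2 : Real.exp (-(t/(2*R^2)) - a * mfh r t) ≤ Real.exp (-(a*r)) := by
      apply Real.exp_le_exp.2
      have h3 : a * r ≤ a * mfh r t := mul_le_mul_of_nonneg_left hh ha.le
      have h4 : 0 ≤ t/(2*R^2) := by have := ht.1.le; positivity
      linarith
    calc (1 + t) ^ (-(d:ℝ)/2) * Real.exp (-(t / (2 * R ^ 2)) - a * mfh r t)
        ≤ 1 * Real.exp (-(a*r)) :=
          mul_le_mul h1 h2 (Real.exp_nonneg _) zero_le_one
      _ = Real.exp (-(a*r)) := one_mul _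
  calc (∫⁻ t in Set.Ioc (0:ℝ) r, ENNReal.ofReal
      ((1 + t) ^ (-(d:ℝ)/2) * Real.exp (-(t / (2 * R ^ 2)) - a * mfh r t)))
      ≤ ENNReal.ofReal (Real.exp (-(a * r))) * volume (Set.Ioc (0:ℝ) r) :=
        lint_le_const measurableSet_Ioc hb
    _ ≤ ENNReal.ofReal (Real.exp (-(a * r))) * ENNReal.ofReal r := by
        rw [Real.volume_Ioc]
        exact mul_le_mul_right (ENNReal.ofReal_le_ofReal (by linarith)) _
    _ = ENNReal.ofReal (Real.exp (-(a * r)) * r) :=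
        (ENNReal.ofReal_mul (Real.exp_nonneg _)).symm

-- Piece 2: (r, r²], r ≥ 1
lemma pieceP2 (d : ℕ) {a R r : ℝ} (ha : 0 < a) (hR : 1 ≤ R) (hr : 1 ≤ r) :
    (∫⁻ t in Set.Ioc r (r^2), ENNReal.ofReal
      ((1 + t) ^ (-(d:ℝ)/2) * Real.exp (-(t / (2 * R ^ 2)) - a * mfh r t)))
    ≤ ENNReal.ofReal (((d.factorial : ℝ) / a^d) * r ^ ((2:ℝ) - d)) := by
  have hr0 : (0:ℝ) < r := lt_of_lt_of_le zero_lt_one hr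
  have hK : (0:ℝ) ≤ (d.factorial : ℝ) / a^d := by positivity
  have hb : ∀ t ∈ Set.Ioc r (r^2),
      (1 + t) ^ (-(d:ℝ)/2) * Real.exp (-(t / (2 * R ^ 2)) - a * mfh r t)
        ≤ ((d.factorial : ℝ) / a^d) * r ^ (-(d:ℝ)) := by
    intro t ht
    have ht0 : (0:ℝ) < t := hr0.trans ht.1
    have h1 : (1+t) ^ (-(d:ℝ)/2) ≤ t ^ (-(d:ℝ)/2) :=
      Real.rpow_le_rpow_of_nonpos ht0 (by linarith) (exp_nonpos_aux d)
    have h2 : Real.exp (-(t/(2*R^2)) - a * mfh r t) ≤ Real.exp (-(a * (r^2/t))) := by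
      apply Real.exp_le_exp.2
      have h3 : a * (r^2/t) ≤ a * mfh r t :=
        mul_le_mul_of_nonneg_left (mfh_ge_sq_div hr0.le ht.1.le) ha.le
      have h4 : 0 ≤ t/(2*R^2) := by positivity
      linarith
    have h5 : Real.exp (-(a * (r^2/t))) ≤ (d.factorial : ℝ) / (a * (r^2/t))^d :=
      exp_neg_le d (by positivity)
    have h6 : ((d.factorial : ℝ) / (a * (r^2/t))^d)
        = ((d.factorial : ℝ) / a^d) * t^(d:ℕ) / r^(2*d) := by
      rw [mul_pow, div_pow, pow_mul]
      field_simp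
    have e1 : t ^ (-(d:ℝ)/2) * t^(d:ℕ) = t ^ ((d:ℝ)/2) := by
      rw [← Real.rpow_natCast t d, ← Real.rpow_add ht0,
        show -(d:ℝ)/2 + (d:ℝ) = (d:ℝ)/2 by ring]
    have e2 : t ^ ((d:ℝ)/2) ≤ r ^ (d:ℕ) := by
      calc t ^ ((d:ℝ)/2) ≤ (r^2) ^ ((d:ℝ)/2) :=
            Real.rpow_le_rpow ht0.le ht.2 (by positivity)
        _ = r ^ (d:ℕ) := by
            rw [← Real.rpow_natCast r 2, ← Real.rpow_mul hr0.le, ← Real.rpow_natCast r d]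
            norm_num
            rw [show (2:ℝ)*((d:ℝ)/2) = (d:ℝ) by ring]
            exact Real.rpow_natCast r d
    have e3 : (r:ℝ) ^ (d:ℕ) / r^(2*d) = r ^ (-(d:ℝ)) := by
      rw [Real.rpow_neg hr0.le, Real.rpow_natCast, two_mul, pow_add]
      field_simp
    calc (1 + t) ^ (-(d:ℝ)/2) * Real.exp (-(t / (2 * R ^ 2)) - a * mfh r t)
        ≤ t ^ (-(d:ℝ)/2) * ((d.factorial : ℝ) / (a * (r^2/t))^d) :=
          mul_le_mul h1 (h2.trans h5) (Real.exp_nonneg _)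
            (Real.rpow_nonneg ht0.le _)
      _ = ((d.factorial : ℝ) / a^d) * (t ^ (-(d:ℝ)/2) * t^(d:ℕ)) / r^(2*d) := by
          rw [h6]; ring
      _ = ((d.factorial : ℝ) / a^d) * t ^ ((d:ℝ)/2) / r^(2*d) := by rw [e1]
      _ ≤ ((d.factorial : ℝ) / a^d) * r ^ (d:ℕ) / r^(2*d) := by
          apply div_le_div_of_nonneg_right ?_ (by positivity)
          exact mul_le_mul_of_nonneg_left e2 hK
      _ = ((d.factorial : ℝ) / a^d) * ((r:ℝ) ^ (d:ℕ) / r^(2*d)) := by ring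
      _ = ((d.factorial : ℝ) / a^d) * r ^ (-(d:ℝ)) := by rw [e3]
  calc (∫⁻ t in Set.Ioc r (r^2), ENNReal.ofReal
      ((1 + t) ^ (-(d:ℝ)/2) * Real.exp (-(t / (2 * R ^ 2)) - a * mfh r t)))
      ≤ ENNReal.ofReal (((d.factorial : ℝ) / a^d) * r ^ (-(d:ℝ)))
          * volume (Set.Ioc r (r^2)) := lint_le_const measurableSet_Ioc hb
    _ ≤ ENNReal.ofReal (((d.factorial : ℝ) / a^d) * r ^ (-(d:ℝ)))
          * ENNReal.ofReal (r^2) := by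
        rw [Real.volume_Ioc]
        exact mul_le_mul_right (ENNReal.ofReal_le_ofReal (by nlinarith)) _
    _ = ENNReal.ofReal (((d.factorial : ℝ) / a^d) * r ^ (-(d:ℝ)) * r^2) := by
        rw [← ENNReal.ofReal_mul (mul_nonneg hK (Real.rpow_nonneg hr0.le _))]
    _ = ENNReal.ofReal (((d.factorial : ℝ) / a^d) * r ^ ((2:ℝ) - d)) := by
        congr 1
        rw [mul_assoc]
        congr 1
        rw [← Real.rpow_natCast r 2, ← Real.rpow_add hr0]
        norm_num
        rw [show -(d:ℝ) + 2 = 2 - (d:ℝ) by ring]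

-- generic: integrand ≤ t^(-(d/2)) on Ioi A, A > 0 (for d ≥ 3 tail)
lemma pieceTail3 (d : ℕ) (hd3 : 3 ≤ d) {a R r A : ℝ} (ha : 0 < a) (hr : 0 ≤ r) (hA : 0 < A) :
    (∫⁻ t in Set.Ioi A, ENNReal.ofReal
      ((1 + t) ^ (-(d:ℝ)/2) * Real.exp (-(t / (2 * R ^ 2)) - a * mfh r t)))
    ≤ ENNReal.ofReal ((2/((d:ℝ)-2)) * A ^ ((2-(d:ℝ))/2)) := by
  have h := lint_rpow_tail hd3 hA
  rw [← h]
  apply setLIntegral_mono' measurableSet_Ioi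
  intro t ht
  apply ENNReal.ofReal_le_ofReal
  have ht0 : (0:ℝ) < t := hA.trans ht
  have h1 : (1+t) ^ (-(d:ℝ)/2) ≤ t ^ (-(d:ℝ)/2) :=
    Real.rpow_le_rpow_of_nonpos ht0 (by linarith) (exp_nonpos_aux d)
  have h2 : Real.exp (-(t / (2 * R ^ 2)) - a * mfh r t) ≤ 1 := by
    rw [Real.exp_le_one_iff]
    have h3 : 0 ≤ a * mfh r t := mul_nonneg ha.le (mfh_nonneg hr ht0)
    have h4 : 0 ≤ t/(2*R^2) := by positivity
    linarith
  calc (1 + t) ^ (-(d:ℝ)/2) * Real.exp (-(t / (2 * R ^ 2)) - a * mfh r t)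
      ≤ t ^ (-(d:ℝ)/2) * 1 := mul_le_mul h1 h2 (Real.exp_nonneg _)
        (Real.rpow_nonneg ht0.le _)
    _ = t ^ (-(d:ℝ)/2) := mul_one _

-- exp tail: Ioi M with R² ≤ M, d ≥ 2
lemma pieceTailExp (d : ℕ) (hd : 2 ≤ d) {a R r M : ℝ} (ha : 0 < a) (hR : 1 ≤ R)
    (hr : 0 ≤ r) (hM : R^2 ≤ M) :
    (∫⁻ t in Set.Ioi M, ENNReal.ofReal
      ((1 + t) ^ (-(d:ℝ)/2) * Real.exp (-(t / (2 * R ^ 2)) - a * mfh r t)))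
    ≤ ENNReal.ofReal 2 := by
  have hR0 : (0:ℝ) < R := lt_of_lt_of_le zero_lt_one hR
  have hM0 : (0:ℝ) < M := lt_of_lt_of_le (by positivity) hM
  have hb : ∀ t ∈ Set.Ioi M,
      (1 + t) ^ (-(d:ℝ)/2) * Real.exp (-(t / (2 * R ^ 2)) - a * mfh r t)
        ≤ (1/R^2) * Real.exp (-((1/(2*R^2)) * t)) := by
    intro t ht
    have ht0 : (0:ℝ) < t := hM0.trans ht
    have h1 : (1+t) ^ (-(d:ℝ)/2) ≤ (1+t) ^ (-1:ℝ) :=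
      Real.rpow_le_rpow_of_exponent_le (by linarith) (exp_le_neg_one d hd)
    have h1' : (1+t) ^ (-1:ℝ) ≤ 1/R^2 := by
      rw [Real.rpow_neg_one, inv_eq_one_div]
      have htM : M < t := ht
      exact one_div_le_one_div_of_le (by positivity) (by linarith)
    have h2 : Real.exp (-(t / (2 * R ^ 2)) - a * mfh r t)
        ≤ Real.exp (-((1/(2*R^2)) * t)) := by
      apply Real.exp_le_exp.2
      have h3 : 0 ≤ a * mfh r t := mul_nonneg ha.le (mfh_nonneg hr ht0)
      have h4 : (1/(2*R^2)) * t = t / (2*R^2) := by ring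
      rw [h4]; linarith
    exact mul_le_mul (h1.trans h1') h2 (Real.exp_nonneg _) (by positivity)
  calc (∫⁻ t in Set.Ioi M, ENNReal.ofReal
      ((1 + t) ^ (-(d:ℝ)/2) * Real.exp (-(t / (2 * R ^ 2)) - a * mfh r t)))
      ≤ (∫⁻ t in Set.Ioi M,
          ENNReal.ofReal ((1/R^2) * Real.exp (-((1/(2*R^2)) * t)))) :=
        setLIntegral_mono' measurableSet_Ioi fun t ht =>
          ENNReal.ofReal_le_ofReal (hb t ht)
    _ = ENNReal.ofReal (1/R^2) * (∫⁻ t in Set.Ioi M,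
          ENNReal.ofReal (Real.exp (-((1/(2*R^2)) * t)))) := by
        simp only [ENNReal.ofReal_mul (by positivity : (0:ℝ) ≤ 1/R^2)]
        exact lintegral_const_mul' _ _ ENNReal.ofReal_ne_top
    _ ≤ ENNReal.ofReal (1/R^2) * ENNReal.ofReal (1/(1/(2*R^2))) := by
        apply mul_le_mul_right
        exact lint_exp_tail (by positivity) (le_trans (by positivity) hM)
    _ = ENNReal.ofReal ((1/R^2) * (1/(1/(2*R^2)))) :=
        (ENNReal.ofReal_mul (by positivity)).symm
    _ = ENNReal.ofReal 2 := by
        congr 1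
        field_simp

-- log piece: Ioc A B with 0 < A ≤ B, d ≥ 2
lemma pieceLog (d : ℕ) (hd : 2 ≤ d) {a R r A B : ℝ} (ha : 0 < a) (hr : 0 ≤ r)
    (hA : 1 ≤ A) (hAB : A ≤ B) :
    (∫⁻ t in Set.Ioc A B, ENNReal.ofReal
      ((1 + t) ^ (-(d:ℝ)/2) * Real.exp (-(t / (2 * R ^ 2)) - a * mfh r t)))
    ≤ ENNReal.ofReal (Real.log (B / A)) := by
  have hA0 : (0:ℝ) < A := lt_of_lt_of_le zero_lt_one hA
  rw [← lint_one_div_Ioc hA0 hAB]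
  apply setLIntegral_mono' measurableSet_Ioc
  intro t ht
  apply ENNReal.ofReal_le_ofReal
  have ht0 : (0:ℝ) < t := hA0.trans ht.1
  have h1 : (1+t) ^ (-(d:ℝ)/2) ≤ (1+t) ^ (-1:ℝ) :=
    Real.rpow_le_rpow_of_exponent_le (by linarith) (exp_le_neg_one d hd)
  have h1' : (1+t) ^ (-1:ℝ) ≤ 1/t := by
    rw [Real.rpow_neg_one, inv_eq_one_div]
    exact one_div_le_one_div_of_le ht0 (by linarith)
  have h2 : Real.exp (-(t / (2 * R ^ 2)) - a * mfh r t) ≤ 1 := by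
    rw [Real.exp_le_one_iff]
    have h3 : 0 ≤ a * mfh r t := mul_nonneg ha.le (mfh_nonneg hr ht0)
    have h4 : 0 ≤ t/(2*R^2) := by positivity
    linarith
  have := mul_le_mul (h1.trans h1') h2 (Real.exp_nonneg _) (by positivity : (0:ℝ) ≤ 1/t)
  simpa using this

-- piece on Ioc 0 1 : bounded by 1
lemma pieceOne (d : ℕ) {a R r : ℝ} (ha : 0 < a) (hr : 0 ≤ r) :
    (∫⁻ t in Set.Ioc (0:ℝ) 1, ENNReal.ofReal
      ((1 + t) ^ (-(d:ℝ)/2) * Real.exp (-(t / (2 * R ^ 2)) - a * mfh r t)))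
    ≤ ENNReal.ofReal 1 := by
  have hb : ∀ t ∈ Set.Ioc (0:ℝ) 1,
      (1 + t) ^ (-(d:ℝ)/2) * Real.exp (-(t / (2 * R ^ 2)) - a * mfh r t) ≤ 1 := by
    intro t ht
    have ht0 : (0:ℝ) < t := ht.1
    have h1 : (1+t) ^ (-(d:ℝ)/2) ≤ 1 :=
      Real.rpow_le_one_of_one_le_of_nonpos (by linarith) (exp_nonpos_aux d)
    have h2 : Real.exp (-(t / (2 * R ^ 2)) - a * mfh r t) ≤ 1 := by
      rw [Real.exp_le_one_iff]
      have h3 : 0 ≤ a * mfh r t := mul_nonneg ha.le (mfh_nonneg hr ht0)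
      have h4 : 0 ≤ t/(2*R^2) := by positivity
      linarith
    have := mul_le_mul h1 h2 (Real.exp_nonneg _) zero_le_one
    simpa using this
  have h := lint_le_const (s := Set.Ioc (0:ℝ) 1) measurableSet_Ioc hb
  rw [Real.volume_Ioc] at h
  refine h.trans ?_
  rw [← ENNReal.ofReal_mul zero_le_one]
  norm_num

lemma aux_rexp {a r : ℝ} (ha : 0 < a) (hr : 0 ≤ r) : Real.exp (-(a*r)) * r ≤ 1/a := by
  have h := Real.add_one_le_exp (a*r)
  have he := Real.exp_pos (a*r)
  rw [Real.exp_neg]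
  rw [inv_mul_eq_div, div_le_div_iff₀ he ha]
  nlinarith

lemma aux_sq_rpow {r : ℝ} (hr0 : 0 < r) (e : ℝ) : (r^2) ^ (e/2) = r ^ e := by
  rw [← Real.rpow_natCast r 2, ← Real.rpow_mul hr0.le]
  norm_num
  rw [show (2:ℝ) * (e/2) = e by ring]

lemma aux1 {a r : ℝ} (d : ℕ) (hd : 3 ≤ d) (ha : 0 < a) (hr : 1 ≤ r) :
    Real.exp (-(a*r)) * r ≤ (((d-1).factorial : ℝ)/a^(d-1)) * r ^ ((2:ℝ) - d) := by
  have hr0 : (0:ℝ) < r := lt_of_lt_of_le zero_lt_one hr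
  have h5 : Real.exp (-(a * r)) ≤ ((d-1).factorial : ℝ) / (a * r)^(d-1) :=
    exp_neg_le (d-1) (by positivity)
  have e1 : r ^ ((2:ℝ) - d) = r / r^((d-1:ℕ)) := by
    rw [eq_div_iff (by positivity : (r:ℝ)^((d-1:ℕ)) ≠ 0), ← Real.rpow_natCast r (d-1),
      ← Real.rpow_add hr0]
    have : (((d-1:ℕ)):ℝ) = (d:ℝ) - 1 := by
      have : 1 ≤ d := le_trans (by norm_num) hd
      push_cast [Nat.cast_sub this]
      ring
    rw [this, show (2:ℝ) - d + ((d:ℝ) - 1) = 1 by ring, Real.rpow_one]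
  rw [e1]
  have h6 : Real.exp (-(a * r)) * r ≤ (((d-1).factorial : ℝ) / (a * r)^(d-1)) * r :=
    mul_le_mul_of_nonneg_right h5 hr0.le
  refine h6.trans (le_of_eq ?_)
  rw [mul_pow]
  field_simp

lemma aux2 {r D : ℝ} (hr : 1 ≤ r) (hD : 2 ≤ D) :
    r ^ ((2:ℝ) - D) ≤ 2 ^ (D - (2:ℝ)) * (r+1) ^ ((2:ℝ) - D) := by
  have hr0 : (0:ℝ) < r := lt_of_lt_of_le zero_lt_one hr
  have h1 : (2*r) ^ ((2:ℝ) - D) ≤ (r+1) ^ ((2:ℝ) - D) :=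
    Real.rpow_le_rpow_of_nonpos (by linarith) (by linarith) (by linarith)
  rw [Real.mul_rpow (by norm_num) hr0.le] at h1
  have h2 := mul_le_mul_of_nonneg_left h1 (le_of_lt (Real.rpow_pos_of_pos two_pos (D-2)))
  calc r ^ ((2:ℝ) - D)
      = (2 ^ (D-(2:ℝ)) * 2 ^ ((2:ℝ)-D)) * r ^ ((2:ℝ)-D) := by
        rw [← Real.rpow_add two_pos, show D - (2:ℝ) + ((2:ℝ) - D) = 0 by ring,
          Real.rpow_zero, one_mul]
    _ = 2 ^ (D-(2:ℝ)) * (2 ^ ((2:ℝ)-D) * r ^ ((2:ℝ)-D)) := by ring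
    _ ≤ 2 ^ (D-(2:ℝ)) * (r+1) ^ ((2:ℝ) - D) := h2

lemma aux3 {r : ℝ} (hr0 : 0 ≤ r) (hr : r ≤ 1) {D : ℝ} (hD : 2 ≤ D) :
    (2:ℝ) ^ ((2:ℝ) - D) ≤ (r+1) ^ ((2:ℝ) - D) :=
  Real.rpow_le_rpow_of_nonpos (by linarith) (by linarith) (by linarith)

set_option maxHeartbeats 2000000 in
lemma core (d : ℕ) (hd : 2 ≤ d) (a : ℝ) (ha : 0 < a) :
    ∃ C : ℝ, 0 < C ∧ ∀ R : ℝ, 1 ≤ R → ∀ r : ℝ, 0 ≤ r →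
      (∫⁻ t in Set.Ioi (0:ℝ), ENNReal.ofReal
        ((1 + t) ^ (-(d:ℝ)/2) * Real.exp (-(t / (2 * R ^ 2)) - a * mfh r t)))
      ≤ ENNReal.ofReal (C * (if d = 2 then 1 + Real.log (R / min (r+1) R)
          else (r+1) ^ ((2:ℝ) - d))) := by
  by_cases hd2 : d = 2
  · subst hd2
    refine ⟨1/a + 2/a^2 + 12, by positivity, ?_⟩
    intro R hR r hr
    simp only [if_pos]
    have hR0 : (0:ℝ) < R := lt_of_lt_of_le zero_lt_one hR
    have hm0 : (0:ℝ) < min (r+1) R := lt_min (by linarith) hR0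
    set L := Real.log (R / min (r+1) R) with hLdef
    have hL : 0 ≤ L := Real.log_nonneg ((le_div_iff₀ hm0).2 (by simpa using min_le_right (r+1) R))
    have hlogR : Real.log R = L + Real.log (min (r+1) R) := by
      rw [hLdef, Real.log_div hR0.ne' hm0.ne']
      ring
    have hlog2 : Real.log 2 ≤ 1 := by
      have := Real.log_le_sub_one_of_pos (by norm_num : (0:ℝ) < 2)
      linarith
    have ha1 : (0:ℝ) ≤ 1/a := by positivity
    have ha2 : (0:ℝ) ≤ 2/a^2 := by positivity
    rcases le_or_gt 1 r with hr1 | hr1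
    · -- r ≥ 1
      have hr0 : (0:ℝ) < r := lt_of_lt_of_le zero_lt_one hr1
      have hrr : (1:ℝ) ≤ r^2 := by nlinarith
      set M := max (r^2) (R^2) with hMdef
      have hM1 : r^2 ≤ M := le_max_left _ _
      have hM2 : R^2 ≤ M := le_max_right _ _
      have hsub : Set.Ioi (0:ℝ) ⊆ (Set.Ioc 0 r ∪ Set.Ioc r (r^2)) ∪
          (Set.Ioc (r^2) M ∪ Set.Ioi M) := by
        intro t ht
        rcases le_or_gt t r with h1 | h1
        · exact Or.inl (Or.inl ⟨ht, h1⟩)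
        rcases le_or_gt t (r^2) with h2 | h2
        · exact Or.inl (Or.inr ⟨h1, h2⟩)
        rcases le_or_gt t M with h3 | h3
        · exact Or.inr (Or.inl ⟨h2, h3⟩)
        · exact Or.inr (Or.inr h3)
      have hb3 : Real.log (M / r^2) ≤ 2 * (1 + L) := by
        rcases le_or_gt R r with hcase | hcase
        · have : M = r^2 := max_eq_left (by nlinarith)
          rw [this, div_self (by positivity), Real.log_one]
          linarith
        · have hMR : M = R^2 := max_eq_right (by nlinarith)
          have e1 : M / r^2 = (R/r)^2 := by rw [hMR, div_pow]
          rw [e1, Real.log_pow]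
          have e2 : Real.log (R/r) = Real.log R - Real.log r :=
            Real.log_div hR0.ne' hr0.ne'
          have e3 : Real.log (min (r+1) R) ≤ Real.log (2*r) := by
            apply Real.log_le_log hm0
            have := min_le_left (r+1) R
            linarith
          have e4 : Real.log (2*r) = Real.log 2 + Real.log r :=
            Real.log_mul (by norm_num) hr0.ne'
          push_cast
          nlinarith [hlogR, hlog2]
      calc (∫⁻ t in Set.Ioi (0:ℝ), ENNReal.ofReal
            ((1 + t) ^ (-((2:ℕ):ℝ)/2) * Real.exp (-(t / (2 * R ^ 2)) - a * mfh r t)))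
          ≤ (∫⁻ t in (Set.Ioc 0 r ∪ Set.Ioc r (r^2)) ∪ (Set.Ioc (r^2) M ∪ Set.Ioi M),
              ENNReal.ofReal
            ((1 + t) ^ (-((2:ℕ):ℝ)/2) * Real.exp (-(t / (2 * R ^ 2)) - a * mfh r t))) :=
            lintegral_mono_set hsub
        _ ≤ ((∫⁻ t in Set.Ioc (0:ℝ) r, ENNReal.ofReal
            ((1 + t) ^ (-((2:ℕ):ℝ)/2) * Real.exp (-(t / (2 * R ^ 2)) - a * mfh r t)))
            + (∫⁻ t in Set.Ioc r (r^2), ENNReal.ofReal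
            ((1 + t) ^ (-((2:ℕ):ℝ)/2) * Real.exp (-(t / (2 * R ^ 2)) - a * mfh r t))))
            + ((∫⁻ t in Set.Ioc (r^2) M, ENNReal.ofReal
            ((1 + t) ^ (-((2:ℕ):ℝ)/2) * Real.exp (-(t / (2 * R ^ 2)) - a * mfh r t)))
            + (∫⁻ t in Set.Ioi M, ENNReal.ofReal
            ((1 + t) ^ (-((2:ℕ):ℝ)/2) * Real.exp (-(t / (2 * R ^ 2)) - a * mfh r t)))) :=
            le_trans (lintegral_union_le _ _ _)
              (add_le_add (lintegral_union_le _ _ _) (lintegral_union_le _ _ _))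
        _ ≤ (ENNReal.ofReal (Real.exp (-(a * r)) * r)
              + ENNReal.ofReal (((Nat.factorial 2 : ℝ) / a^2) * r ^ ((2:ℝ) - (2:ℕ))))
            + (ENNReal.ofReal (Real.log (M / r^2)) + ENNReal.ofReal 2) :=
            add_le_add (add_le_add (pieceP1 2 ha hR) (pieceP2 2 ha hR hr1))
              (add_le_add (pieceLog 2 le_rfl ha hr hrr hM1) (pieceTailExp 2 le_rfl ha hR hr hM2))
        _ = ENNReal.ofReal ((Real.exp (-(a * r)) * r
              + ((Nat.factorial 2 : ℝ) / a^2) * r ^ ((2:ℝ) - (2:ℕ)))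
              + (Real.log (M / r^2) + 2)) := by
            rw [← ENNReal.ofReal_add (by positivity) (by positivity),
              ← ENNReal.ofReal_add ?h1 (by norm_num),
              ← ENNReal.ofReal_add ?h2 ?h3]
            case h1 =>
              exact Real.log_nonneg ((le_div_iff₀ (by positivity)).2 (by nlinarith [hM1]))
            case h2 =>
              exact add_nonneg (mul_nonneg (Real.exp_nonneg _) hr0.le)
                (mul_nonneg (by positivity) (Real.rpow_nonneg hr0.le _))
            case h3 =>
              have : (0:ℝ) ≤ Real.log (M / r^2) := by
                apply Real.log_nonneg
                rw [le_div_iff₀ (by positivity)]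
                nlinarith [hM1]
              linarith
        _ ≤ ENNReal.ofReal ((1/a + 2/a^2 + 12) * (1 + L)) := by
            apply ENNReal.ofReal_le_ofReal
            have hb1 : Real.exp (-(a * r)) * r ≤ 1/a := aux_rexp ha hr0.le
            have hb2 : ((Nat.factorial 2 : ℝ) / a^2) * r ^ ((2:ℝ) - (2:ℕ)) = 2/a^2 := by
              norm_num
            rw [hb2]
            nlinarith [hb3, hL]
    · -- r < 1
      have hRR : (1:ℝ) ≤ R^2 := by nlinarith
      have hsub : Set.Ioi (0:ℝ) ⊆ (Set.Ioc (0:ℝ) 1 ∪ Set.Ioc 1 (R^2)) ∪ Set.Ioi (R^2) := by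
        intro t ht
        rcases le_or_gt t 1 with h1 | h1
        · exact Or.inl (Or.inl ⟨ht, h1⟩)
        rcases le_or_gt t (R^2) with h2 | h2
        · exact Or.inl (Or.inr ⟨h1, h2⟩)
        · exact Or.inr h2
      have hmle : Real.log (min (r+1) R) ≤ 1 := by
        have h1 : Real.log (min (r+1) R) ≤ Real.log 2 := by
          apply Real.log_le_log hm0
          have := min_le_left (r+1) R
          linarith
        linarith
      calc (∫⁻ t in Set.Ioi (0:ℝ), ENNReal.ofReal
            ((1 + t) ^ (-((2:ℕ):ℝ)/2) * Real.exp (-(t / (2 * R ^ 2)) - a * mfh r t)))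
          ≤ (∫⁻ t in (Set.Ioc (0:ℝ) 1 ∪ Set.Ioc 1 (R^2)) ∪ Set.Ioi (R^2),
              ENNReal.ofReal
            ((1 + t) ^ (-((2:ℕ):ℝ)/2) * Real.exp (-(t / (2 * R ^ 2)) - a * mfh r t))) :=
            lintegral_mono_set hsub
        _ ≤ ((∫⁻ t in Set.Ioc (0:ℝ) 1, ENNReal.ofReal
            ((1 + t) ^ (-((2:ℕ):ℝ)/2) * Real.exp (-(t / (2 * R ^ 2)) - a * mfh r t)))
            + (∫⁻ t in Set.Ioc (1:ℝ) (R^2), ENNReal.ofReal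
            ((1 + t) ^ (-((2:ℕ):ℝ)/2) * Real.exp (-(t / (2 * R ^ 2)) - a * mfh r t))))
            + (∫⁻ t in Set.Ioi (R^2), ENNReal.ofReal
            ((1 + t) ^ (-((2:ℕ):ℝ)/2) * Real.exp (-(t / (2 * R ^ 2)) - a * mfh r t))) :=
            le_trans (lintegral_union_le _ _ _)
              (add_le_add_left (lintegral_union_le _ _ _) _)
        _ ≤ (ENNReal.ofReal 1 + ENNReal.ofReal (Real.log (R^2 / 1)))
            + ENNReal.ofReal 2 :=
            add_le_add (add_le_add (pieceOne 2 ha hr) (pieceLog 2 le_rfl ha hr le_rfl hRR))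
              (pieceTailExp 2 le_rfl ha hR hr le_rfl)
        _ = ENNReal.ofReal ((1 + Real.log (R^2 / 1)) + 2) := by
            rw [← ENNReal.ofReal_add (by norm_num) ?hl, ← ENNReal.ofReal_add ?hb (by norm_num)]
            case hl => exact Real.log_nonneg (by simpa using hRR)
            case hb =>
              have : (0:ℝ) ≤ Real.log (R^2/1) := Real.log_nonneg (by simpa using hRR)
              linarith
        _ ≤ ENNReal.ofReal ((1/a + 2/a^2 + 12) * (1 + L)) := by
            apply ENNReal.ofReal_le_ofReal
            have e1 : Real.log (R^2 / 1) = 2 * Real.log R := by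
              rw [div_one, Real.log_pow]
              push_cast
              ring
            rw [e1]
            nlinarith [hlogR, hmle, hL]
  · -- d ≥ 3
    have hd3 : 3 ≤ d := by omega
    have hD3 : (3:ℝ) ≤ (d:ℝ) := by exact_mod_cast hd3
    have h32 : (0:ℝ) < (d:ℝ) - 2 := by linarith
    set K1 : ℝ := ((d-1).factorial : ℝ)/a^(d-1) with hK1def
    set K2 : ℝ := ((d).factorial : ℝ)/a^d with hK2def
    set K3 : ℝ := 2/((d:ℝ)-2) with hK3def
    have hK1 : 0 < K1 := by positivity
    have hK2 : 0 < K2 := by positivity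
    have hK3 : 0 < K3 := div_pos two_pos h32
    have hP : (0:ℝ) < 2 ^ ((d:ℝ) - (2:ℝ)) := Real.rpow_pos_of_pos two_pos _
    have hPP : (2:ℝ) ^ ((d:ℝ) - (2:ℝ)) * 2 ^ ((2:ℝ) - (d:ℝ)) = 1 := by
      rw [← Real.rpow_add two_pos, show (d:ℝ) - 2 + ((2:ℝ) - d) = 0 by ring, Real.rpow_zero]
    have hS : (0:ℝ) < 1 + K1 + K2 + 2*K3 := by linarith
    refine ⟨(1 + K1 + K2 + 2*K3) * 2 ^ ((d:ℝ) - (2:ℝ)) + 1, by nlinarith [mul_pos hS hP], ?_⟩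
    intro R hR r hr
    rw [if_neg hd2]
    set C : ℝ := (1 + K1 + K2 + 2*K3) * 2 ^ ((d:ℝ) - (2:ℝ)) + 1 with hCdef
    have hC : 0 < C := by nlinarith [mul_pos hS hP]
    rcases le_or_gt 1 r with hr1 | hr1
    · -- r ≥ 1
      have hr0 : (0:ℝ) < r := lt_of_lt_of_le zero_lt_one hr1
      have hrr : (0:ℝ) < r^2 := by positivity
      have hsub : Set.Ioi (0:ℝ) ⊆ (Set.Ioc 0 r ∪ Set.Ioc r (r^2)) ∪ Set.Ioi (r^2) := by
        intro t ht
        rcases le_or_gt t r with h1 | h1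
        · exact Or.inl (Or.inl ⟨ht, h1⟩)
        rcases le_or_gt t (r^2) with h2 | h2
        · exact Or.inl (Or.inr ⟨h1, h2⟩)
        · exact Or.inr h2
      calc (∫⁻ t in Set.Ioi (0:ℝ), ENNReal.ofReal
            ((1 + t) ^ (-(d:ℝ)/2) * Real.exp (-(t / (2 * R ^ 2)) - a * mfh r t)))
          ≤ (∫⁻ t in (Set.Ioc 0 r ∪ Set.Ioc r (r^2)) ∪ Set.Ioi (r^2),
              ENNReal.ofReal
            ((1 + t) ^ (-(d:ℝ)/2) * Real.exp (-(t / (2 * R ^ 2)) - a * mfh r t))) :=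
            lintegral_mono_set hsub
        _ ≤ ((∫⁻ t in Set.Ioc (0:ℝ) r, ENNReal.ofReal
            ((1 + t) ^ (-(d:ℝ)/2) * Real.exp (-(t / (2 * R ^ 2)) - a * mfh r t)))
            + (∫⁻ t in Set.Ioc r (r^2), ENNReal.ofReal
            ((1 + t) ^ (-(d:ℝ)/2) * Real.exp (-(t / (2 * R ^ 2)) - a * mfh r t))))
            + (∫⁻ t in Set.Ioi (r^2), ENNReal.ofReal
            ((1 + t) ^ (-(d:ℝ)/2) * Real.exp (-(t / (2 * R ^ 2)) - a * mfh r t))) :=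
            le_trans (lintegral_union_le _ _ _)
              (add_le_add_left (lintegral_union_le _ _ _) _)
        _ ≤ (ENNReal.ofReal (Real.exp (-(a * r)) * r)
              + ENNReal.ofReal (K2 * r ^ ((2:ℝ) - d)))
            + ENNReal.ofReal (K3 * (r^2) ^ ((2-(d:ℝ))/2)) :=
            add_le_add (add_le_add (pieceP1 d ha hR) (pieceP2 d ha hR hr1))
              (pieceTail3 d hd3 ha hr hrr)
        _ = ENNReal.ofReal ((Real.exp (-(a * r)) * r + K2 * r ^ ((2:ℝ) - d))
              + K3 * (r^2) ^ ((2-(d:ℝ))/2)) := by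
            rw [← ENNReal.ofReal_add (by positivity) ?hx1, ← ENNReal.ofReal_add ?hx2 ?hx3]
            case hx1 => exact mul_nonneg hK2.le (Real.rpow_nonneg hr0.le _)
            case hx2 =>
              exact add_nonneg (mul_nonneg (Real.exp_nonneg _) hr0.le)
                (mul_nonneg hK2.le (Real.rpow_nonneg hr0.le _))
            case hx3 => exact mul_nonneg hK3.le (Real.rpow_nonneg hrr.le _)
        _ ≤ ENNReal.ofReal (C * (r+1) ^ ((2:ℝ) - d)) := by
            apply ENNReal.ofReal_le_ofReal
            have hb1 : Real.exp (-(a*r)) * r ≤ K1 * r ^ ((2:ℝ) - d) := aux1 d hd3 ha hr1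
            have hb3 : (r^2) ^ ((2-(d:ℝ))/2) = r ^ ((2:ℝ) - d) := aux_sq_rpow hr0 _
            rw [hb3]
            have hsum : Real.exp (-(a*r)) * r + K2 * r ^ ((2:ℝ) - d)
                + K3 * r ^ ((2:ℝ) - d) ≤ (K1 + K2 + K3) * r ^ ((2:ℝ) - d) := by
              nlinarith [hb1]
            refine hsum.trans ?_
            have haux2 := aux2 hr1 (by linarith : (2:ℝ) ≤ (d:ℝ))
            have hX : (0:ℝ) < (r+1) ^ ((2:ℝ) - d) :=
              Real.rpow_pos_of_pos (by linarith) _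
            calc (K1 + K2 + K3) * r ^ ((2:ℝ) - d)
                ≤ (K1 + K2 + K3) * (2 ^ ((d:ℝ) - (2:ℝ)) * (r+1) ^ ((2:ℝ) - d)) :=
                  mul_le_mul_of_nonneg_left haux2 (by linarith)
              _ = ((K1 + K2 + K3) * 2 ^ ((d:ℝ) - (2:ℝ))) * (r+1) ^ ((2:ℝ) - d) := by ring
              _ ≤ C * (r+1) ^ ((2:ℝ) - d) := by
                  apply mul_le_mul_of_nonneg_right ?_ hX.le
                  rw [hCdef]
                  nlinarith [hP, hK3, hK1, hK2]
    · -- r < 1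
      have hsub : Set.Ioi (0:ℝ) ⊆ Set.Ioc (0:ℝ) 1 ∪ Set.Ioi (1:ℝ) := by
        intro t ht
        rcases le_or_gt t 1 with h1 | h1
        · exact Or.inl ⟨ht, h1⟩
        · exact Or.inr h1
      calc (∫⁻ t in Set.Ioi (0:ℝ), ENNReal.ofReal
            ((1 + t) ^ (-(d:ℝ)/2) * Real.exp (-(t / (2 * R ^ 2)) - a * mfh r t)))
          ≤ (∫⁻ t in Set.Ioc (0:ℝ) 1 ∪ Set.Ioi (1:ℝ), ENNReal.ofReal
            ((1 + t) ^ (-(d:ℝ)/2) * Real.exp (-(t / (2 * R ^ 2)) - a * mfh r t))) :=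
            lintegral_mono_set hsub
        _ ≤ (∫⁻ t in Set.Ioc (0:ℝ) 1, ENNReal.ofReal
            ((1 + t) ^ (-(d:ℝ)/2) * Real.exp (-(t / (2 * R ^ 2)) - a * mfh r t)))
            + (∫⁻ t in Set.Ioi (1:ℝ), ENNReal.ofReal
            ((1 + t) ^ (-(d:ℝ)/2) * Real.exp (-(t / (2 * R ^ 2)) - a * mfh r t))) :=
            lintegral_union_le _ _ _
        _ ≤ ENNReal.ofReal 1 + ENNReal.ofReal (K3 * (1:ℝ) ^ ((2-(d:ℝ))/2)) :=
            add_le_add (pieceOne d ha hr) (pieceTail3 d hd3 ha hr one_pos)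
        _ = ENNReal.ofReal (1 + K3) := by
            rw [← ENNReal.ofReal_add (by norm_num) (by positivity)]
            norm_num [Real.one_rpow]
        _ ≤ ENNReal.ofReal (C * (r+1) ^ ((2:ℝ) - d)) := by
            apply ENNReal.ofReal_le_ofReal
            have haux3 := aux3 hr hr1.le (by linarith : (2:ℝ) ≤ (d:ℝ))
            calc 1 + K3
                = (1 + K3) * (2 ^ ((d:ℝ) - (2:ℝ)) * 2 ^ ((2:ℝ) - (d:ℝ))) := by
                  rw [hPP]; ring
              _ ≤ C * 2 ^ ((2:ℝ) - (d:ℝ)) := by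
                  have h2e : (0:ℝ) < (2:ℝ) ^ ((2:ℝ) - (d:ℝ)) := Real.rpow_pos_of_pos two_pos _
                  rw [hCdef]
                  nlinarith [hP, hK1, hK2, hK3, h2e, mul_pos hP h2e]
              _ ≤ C * (r+1) ^ ((2:ℝ) - d) :=
                  mul_le_mul_of_nonneg_left haux3 hC.le

set_option maxHeartbeats 1000000 in
/-- For `d ≥ 2`, `R ≥ 1`, `c > 0`, there are `C, c₂ > 0` (depending only on `d, c`) with
`∫_0^∞ (1+t)^{-d/2} exp(-t/R² - c h(|y|,t)) dt ≤ C e^{-c₂|y|/R} v(|y|)` for all `y ∈ ℤ^d`. -/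
theorem stmt14 (d : ℕ) (hd : 2 ≤ d) (c : ℝ) (hc : 0 < c) :
    ∃ C c₂ : ℝ, 0 < C ∧ 0 < c₂ ∧
      ∀ R : ℝ, 1 ≤ R → ∀ y : Fin d → ℤ,
        (∫⁻ t in Set.Ioi (0 : ℝ), ENNReal.ofReal
            ((1 + t) ^ (-(d : ℝ) / 2) *
              Real.exp (-t / R ^ 2 - c * mfh (znorm d y) t)))
          ≤ ENNReal.ofReal (C * Real.exp (-c₂ * znorm d y / R) *
              (if d = 2 then 1 + Real.log (R / min (znorm d y + 1) R)
                else (znorm d y + 1) ^ ((2 : ℝ) - d))) := by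

  obtain ⟨C, hC, hcore⟩ := core d hd (c/2) (half_pos hc)
  refine ⟨C, min c 1 / 2, hC, div_pos (lt_min hc one_pos) two_pos, ?_⟩
  intro R hR y
  set c₂ : ℝ := min c 1 / 2 with hc2def
  set r : ℝ := znorm d y with hrdef
  have hr : 0 ≤ r := Real.sqrt_nonneg _
  have hR0 : (0:ℝ) < R := lt_of_lt_of_le zero_lt_one hR
  have hc2a : c₂ ≤ c/2 := by
    rw [hc2def]
    have := min_le_left c 1
    linarith
  have hc2b : c₂ ≤ 1/2 := by
    rw [hc2def]
    have := min_le_right c 1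
    linarith
  have hpt : ∀ t ∈ Set.Ioi (0:ℝ),
      ENNReal.ofReal ((1 + t) ^ (-(d : ℝ) / 2) * Real.exp (-t / R ^ 2 - c * mfh r t))
        ≤ ENNReal.ofReal (Real.exp (-c₂ * r / R)) *
          ENNReal.ofReal ((1 + t) ^ (-(d : ℝ) / 2) *
            Real.exp (-(t / (2 * R ^ 2)) - c / 2 * mfh r t)) := by
    intro t ht
    have ht0 : (0:ℝ) < t := ht
    rw [← ENNReal.ofReal_mul (Real.exp_nonneg _)]
    apply ENNReal.ofReal_le_ofReal
    have hkey : c₂ * (r / R) ≤ t/(2*R^2) + (c/2) * mfh r t := by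
      rcases eq_or_lt_of_le hr with h0 | hr0
      · rw [← h0]
        have h1 : 0 ≤ (c/2) * mfh 0 t := mul_nonneg (by positivity) (mfh_nonneg le_rfl ht0)
        have h2 : 0 ≤ t/(2*R^2) := by positivity
        simp only [zero_div, mul_zero]
        linarith
      · rcases le_or_gt t (r*R) with hcase | hcase
        · have hmax0 : 0 < max r t := lt_max_iff.2 (Or.inr ht0)
          have hmax : max r t ≤ r * R := max_le (le_mul_of_one_le_right hr0.le hR) hcase
          have h1 : r / R ≤ r^2 / max r t := by
            rw [div_le_div_iff₀ hR0 hmax0]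
            nlinarith [hmax]
          have h2 : r / R ≤ mfh r t := h1.trans (mfh_ge_div hr)
          have h4 : c₂ * (r/R) ≤ (c/2) * mfh r t :=
            mul_le_mul hc2a h2 (by positivity) (by positivity)
          have h5 : 0 ≤ t/(2*R^2) := by positivity
          linarith
        · have h1 : r/R ≤ t/R^2 := by
            rw [div_le_div_iff₀ hR0 (by positivity)]
            nlinarith [hcase]
          have h4 : c₂ * (r/R) ≤ (1/2) * (t/R^2) :=
            mul_le_mul hc2b h1 (by positivity) (by norm_num)
          have h2 : 0 ≤ (c/2) * mfh r t := mul_nonneg (by positivity) (mfh_nonneg hr ht0)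
          have h6 : (1/2) * (t/R^2) = t/(2*R^2) := by ring
          linarith
    have hexp : Real.exp (-t / R ^ 2 - c * mfh r t)
        ≤ Real.exp (-c₂ * r / R) *
          Real.exp (-(t / (2 * R ^ 2)) - c / 2 * mfh r t) := by
      rw [← Real.exp_add]
      apply Real.exp_le_exp.2
      have e1 : -t/R^2 = -(t/(2*R^2)) - t/(2*R^2) := by ring
      have e2 : -c₂ * r / R = -(c₂ * (r/R)) := by ring
      have e3 : c * mfh r t = (c/2) * mfh r t + (c/2) * mfh r t := by ring
      rw [e1, e2]
      linarith
    calc (1 + t) ^ (-(d : ℝ) / 2) * Real.exp (-t / R ^ 2 - c * mfh r t)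
        ≤ (1 + t) ^ (-(d : ℝ) / 2) * (Real.exp (-c₂ * r / R) *
            Real.exp (-(t / (2 * R ^ 2)) - c / 2 * mfh r t)) :=
          mul_le_mul_of_nonneg_left hexp (Real.rpow_nonneg (by linarith) _)
      _ = Real.exp (-c₂ * r / R) * ((1 + t) ^ (-(d : ℝ) / 2) *
            Real.exp (-(t / (2 * R ^ 2)) - c / 2 * mfh r t)) := by ring
  calc (∫⁻ t in Set.Ioi (0:ℝ), ENNReal.ofReal
        ((1 + t) ^ (-(d : ℝ) / 2) * Real.exp (-t / R ^ 2 - c * mfh r t)))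
      ≤ (∫⁻ t in Set.Ioi (0:ℝ), ENNReal.ofReal (Real.exp (-c₂ * r / R)) *
          ENNReal.ofReal ((1 + t) ^ (-(d : ℝ) / 2) *
            Real.exp (-(t / (2 * R ^ 2)) - c / 2 * mfh r t))) :=
        setLIntegral_mono' measurableSet_Ioi hpt
    _ = ENNReal.ofReal (Real.exp (-c₂ * r / R)) * (∫⁻ t in Set.Ioi (0:ℝ),
          ENNReal.ofReal ((1 + t) ^ (-(d : ℝ) / 2) *
            Real.exp (-(t / (2 * R ^ 2)) - c / 2 * mfh r t))) :=
        lintegral_const_mul' _ _ ENNReal.ofReal_ne_top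
    _ ≤ ENNReal.ofReal (Real.exp (-c₂ * r / R)) *
          ENNReal.ofReal (C * (if d = 2 then 1 + Real.log (R / min (r+1) R)
            else (r+1) ^ ((2:ℝ) - d))) :=
        mul_le_mul_right (hcore R hR r hr) _
    _ = ENNReal.ofReal (Real.exp (-c₂ * r / R) *
          (C * (if d = 2 then 1 + Real.log (R / min (r+1) R)
            else (r+1) ^ ((2:ℝ) - d)))) :=
        (ENNReal.ofReal_mul (Real.exp_nonneg _)).symm
    _ = ENNReal.ofReal (C * Real.exp (-c₂ * r / R) *
          (if d = 2 then 1 + Real.log (R / min (r+1) R)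
            else (r+1) ^ ((2:ℝ) - d))) := by
        congr 1
        ring
end
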